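/- arXiv:2603.06187 — 6 statements merged into one kernel-verified Lean document; each statement's English description precedes it below -/
import Mathlib

section
/- Let M be a real symmetric n×n matrix. For every initial condition x₀ ∈ S^{n-1}, the solution x(t) := e^{tM} x₀ / ‖e^{tM} x₀‖ of the spherical gradient flow exists for all t ≥ 0 and converges: there exists x_∞ ∈ S^{n-1} such that x(t) → x_∞ as t → ∞. -/
open Matrix Filter

/-- Reinterpret a vector `Fin n → ℝ` as an element of Euclidean space
(the identity map; `EuclideanSpace ℝ (Fin n)` is definitionally `Fin n → ℝ`). -/
def toE {n : ℕ} (v : Fin n → ℝ) : EuclideanSpace ℝ (Fin n) := WithLp.toLp 2 v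

/-- Applying `exp A` to an eigenvector of `A`. -/
lemma exp_mulVec_eigen {n : ℕ} (A : Matrix (Fin n) (Fin n) ℝ) (v : Fin n → ℝ) (a : ℝ)
    (h : A.mulVec v = a • v) :
    (NormedSpace.exp A).mulVec v = Real.exp a • v := by
  letI : SeminormedRing (Matrix (Fin n) (Fin n) ℝ) := Matrix.linftyOpSemiNormedRing
  letI : NormedRing (Matrix (Fin n) (Fin n) ℝ) := Matrix.linftyOpNormedRing
  letI : NormedAlgebra ℝ (Matrix (Fin n) (Fin n) ℝ) := Matrix.linftyOpNormedAlgebra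
  have hpow : ∀ k : ℕ, (A ^ k).mulVec v = a ^ k • v := by
    intro k
    induction k with
    | zero => simp
    | succ k ih =>
      rw [pow_succ', pow_succ', ← Matrix.mulVec_mulVec, ih, Matrix.mulVec_smul, h, smul_smul,
        mul_comm (a ^ k) a]
  let φ : Matrix (Fin n) (Fin n) ℝ →ₗ[ℝ] (Fin n → ℝ) :=
    { toFun := fun B => B.mulVec v
      map_add' := fun B C => Matrix.add_mulVec B C v
      map_smul' := fun r B => Matrix.smul_mulVec r B v }
  let φ' := LinearMap.toContinuousLinearMap φ
  have hsum : Summable fun k : ℕ => (k.factorial⁻¹ : ℝ) • A ^ k :=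
    NormedSpace.expSeries_summable' A
  have hsumR : Summable fun k : ℕ => (k.factorial⁻¹ : ℝ) * a ^ k := by
    simpa [smul_eq_mul] using NormedSpace.expSeries_summable' (𝕂 := ℝ) (𝔸 := ℝ) a
  have key : (NormedSpace.exp A).mulVec v = φ' (NormedSpace.exp A) := rfl
  rw [key, NormedSpace.exp_eq_tsum ℝ, φ'.map_tsum hsum]
  have heach : ∀ k : ℕ, φ' ((k.factorial⁻¹ : ℝ) • A ^ k) = ((k.factorial⁻¹ : ℝ) * a ^ k) • v := by
    intro k
    rw [_root_.map_smul]
    show (k.factorial⁻¹ : ℝ) • (A ^ k).mulVec v = _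
    rw [hpow, smul_smul]
  simp_rw [heach]
  rw [hsumR.tsum_smul_const]
  congr 1
  rw [Real.exp_eq_exp_ℝ, NormedSpace.exp_eq_tsum ℝ]
  simp [smul_eq_mul]

/-- **Convergence of the spherical gradient flow of a quadratic form.**
For a real symmetric matrix `M` and any unit initial condition `x₀`, the
solution `x t = e^{tM} x₀ / ‖e^{tM} x₀‖` of the spherical gradient flow
converges as `t → ∞` to some point `x_∞` of the unit sphere. -/
theorem stmt2 {n : ℕ} (hn : 2 ≤ n) (M : Matrix (Fin n) (Fin n) ℝ) (hM : M.IsSymm)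
    (x₀ : EuclideanSpace ℝ (Fin n)) (hx₀ : ‖x₀‖ = 1)
    (x : ℝ → EuclideanSpace ℝ (Fin n))
    (hxdef : ∀ t : ℝ, x t =
      (‖toE ((NormedSpace.exp (t • M)).mulVec (WithLp.ofLp x₀))‖)⁻¹ •
        toE ((NormedSpace.exp (t • M)).mulVec (WithLp.ofLp x₀))) :
    ∃ xinf : EuclideanSpace ℝ (Fin n), ‖xinf‖ = 1 ∧
      Tendsto x atTop (nhds xinf) := by
  have hH : M.IsHermitian := by
    rwa [Matrix.IsHermitian, Matrix.conjTranspose_eq_transpose_of_trivial]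
  set b := hH.eigenvectorBasis with hb
  set μ := hH.eigenvalues with hμ
  set c : Fin n → ℝ := fun i => b.repr x₀ i with hc
  -- the coercion EuclideanSpace → (Fin n → ℝ) (an identity function)
  let P : EuclideanSpace ℝ (Fin n) → (Fin n → ℝ) := fun v => WithLp.ofLp v
  have hx₀sum : x₀ = ∑ i, c i • b i := by
    rw [hc]; exact (b.sum_repr x₀).symm
  have hx₀ne : x₀ ≠ 0 := by intro h0; rw [h0, norm_zero] at hx₀; norm_num at hx₀
  have hcne : ∃ i, c i ≠ 0 := by
    by_contra h
    push_neg at h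
    apply hx₀ne
    rw [hx₀sum]
    simp [h]
  set s : Finset (Fin n) := Finset.univ.filter (fun i => c i ≠ 0) with hs
  have hsne : s.Nonempty := by
    obtain ⟨i, hi⟩ := hcne
    exact ⟨i, by simp [hs, hi]⟩
  set μmax : ℝ := s.sup' hsne μ with hμmax
  obtain ⟨i₀, hi₀s, hi₀⟩ := Finset.exists_mem_eq_sup' hsne μ
  have hci₀ : c i₀ ≠ 0 := by simpa [hs] using hi₀s
  set d : Fin n → ℝ := fun i => if μ i = μmax then c i else 0 with hd
  set w : EuclideanSpace ℝ (Fin n) := ∑ i, d i • b i with hw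
  have hwne : w ≠ 0 := by
    intro h0
    have hinner : (inner ℝ (b i₀) w : ℝ) = d i₀ := by
      rw [hw]
      exact b.orthonormal.inner_right_fintype d i₀
    rw [h0, inner_zero_right] at hinner
    rw [hd] at hinner
    simp only [← hi₀, ← hμmax, if_pos rfl] at hinner
    exact hci₀ hinner.symm
  -- eigen-decomposition of the flow
  have hu : ∀ t : ℝ, toE ((NormedSpace.exp (t • M)).mulVec (WithLp.ofLp x₀))
      = ∑ i, (Real.exp (t * μ i) * c i) • b i := by
    intro t
    have heig : ∀ i, (NormedSpace.exp (t • M)).mulVec (P (b i))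
        = Real.exp (t * μ i) • P (b i) := by
      intro i
      apply exp_mulVec_eigen
      rw [Matrix.smul_mulVec,
        show M.mulVec (P (b i)) = μ i • P (b i) from hH.mulVec_eigenvectorBasis i, smul_smul]
    have e0 : P x₀ = ∑ i, c i • P (b i) := by
      rw [hx₀sum]; simp [P]
    have e1 : (NormedSpace.exp (t • M)).mulVec (P x₀)
        = ∑ i, c i • (NormedSpace.exp (t • M)).mulVec (P (b i)) := by
      rw [e0]
      have := map_sum (Matrix.mulVecLin (NormedSpace.exp (t • M)))
        (fun i => c i • P (b i)) Finset.univ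
      simp only [Matrix.mulVecLin_apply] at this
      rw [this]
      congr 1
      ext i
      rw [Matrix.mulVec_smul]
    have e2 : (NormedSpace.exp (t • M)).mulVec (P x₀)
        = ∑ i, (Real.exp (t * μ i) * c i) • P (b i) := by
      rw [e1]
      congr 1
      ext i
      rw [heig i, smul_smul, mul_comm]
    rw [toE, e2]; simp [P]
  -- the rescaled flow
  set y : ℝ → EuclideanSpace ℝ (Fin n) :=
    fun t => Real.exp (-(t * μmax)) • toE ((NormedSpace.exp (t • M)).mulVec (WithLp.ofLp x₀)) with hy
  have hyeq : ∀ t, y t = ∑ i, (Real.exp (t * (μ i - μmax)) * c i) • b i := by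
    intro t
    show Real.exp (-(t * μmax)) • toE ((NormedSpace.exp (t • M)).mulVec (WithLp.ofLp x₀)) = _
    rw [hu t, Finset.smul_sum]
    congr 1
    ext i
    rw [smul_smul, ← mul_assoc, ← Real.exp_add,
      show -(t * μmax) + t * μ i = t * (μ i - μmax) by ring]
  have hylim : Tendsto y atTop (nhds w) := by
    rw [funext hyeq, hw]
    apply tendsto_finset_sum
    intro i _
    by_cases hci : c i = 0
    · have hdi : d i = 0 := by rw [hd]; simp [hci]
      rw [hdi, zero_smul]
      simp only [hci, mul_zero, zero_smul]
      exact tendsto_const_nhds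
    · have his : i ∈ s := by simp [hs, hci]
      have hle : μ i ≤ μmax := Finset.le_sup' μ his
      rcases eq_or_lt_of_le hle with heq | hlt
      · have hdi : d i = c i := by rw [hd]; simp [heq]
        rw [hdi]
        have hconst : ∀ t : ℝ, (Real.exp (t * (μ i - μmax)) * c i) • (b i : EuclideanSpace ℝ (Fin n))
            = c i • b i := by
          intro t
          rw [heq]
          simp
        simp only [hconst]
        exact tendsto_const_nhds
      · have hdi : d i = 0 := by rw [hd]; simp [ne_of_lt hlt]
        rw [hdi, zero_smul]
        have hcoef : Tendsto (fun t => Real.exp (t * (μ i - μmax)) * c i) atTop (nhds 0) := by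
          have h1 : Tendsto (fun t : ℝ => t * (μ i - μmax)) atTop atBot :=
            tendsto_id.atTop_mul_const_of_neg (by linarith)
          have h2 := Real.tendsto_exp_atBot.comp h1
          simpa using h2.mul_const (c i)
        simpa using hcoef.smul_const (b i : EuclideanSpace ℝ (Fin n))
  -- normalization is unaffected by positive scaling
  have hnorm : ∀ (r : ℝ) (u : EuclideanSpace ℝ (Fin n)), 0 < r →
      ‖r • u‖⁻¹ • (r • u) = ‖u‖⁻¹ • u := by
    intro r u hr
    rw [norm_smul, Real.norm_eq_abs, abs_of_pos hr, smul_smul]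
    congr 1
    rw [mul_inv, mul_comm r⁻¹ _, mul_assoc, inv_mul_cancel₀ hr.ne', mul_one]
  have hxfun : x = fun t => ‖y t‖⁻¹ • y t := by
    funext t
    rw [hxdef t]
    exact (hnorm _ _ (Real.exp_pos (-(t * μmax)))).symm
  refine ⟨‖w‖⁻¹ • w, ?_, ?_⟩
  · rw [norm_smul, norm_inv, norm_norm, inv_mul_cancel₀ (norm_ne_zero_iff.mpr hwne)]
  · rw [hxfun]
    exact (hylim.norm.inv₀ (norm_ne_zero_iff.mpr hwne)).smul hylim
end

section
/- Let M be a real symmetric n×n matrix whose largest eigenvalue λ₁ is simple, and let x* ∈ S^{n-1} be a unit eigenvector for λ₁. Then for surface-measure-almost every initial condition x₀ ∈ S^{n-1}, the solution x(t) := e^{tM} x₀ / ‖e^{tM} x₀‖ of the spherical gradient flow satisfies min( ‖x(t) − x*‖ , ‖x(t) + x*‖ ) → 0 as t → ∞; i.e., almost every trajectory converges to either x* or −x*. -/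
open Matrix MeasureTheory Filter
open scoped RealInnerProductSpace

lemma exp_mulVec {n : ℕ} (A : Matrix (Fin n) (Fin n) ℝ) (x : EuclideanSpace ℝ (Fin n)) :
    toE ((NormedSpace.exp A).mulVec x) = NormedSpace.exp (Matrix.toEuclideanCLM (𝕜 := ℝ) A) x := by
  letI : SeminormedRing (Matrix (Fin n) (Fin n) ℝ) := Matrix.linftyOpSemiNormedRing
  letI : NormedRing (Matrix (Fin n) (Fin n) ℝ) := Matrix.linftyOpNormedRing
  letI : NormedAlgebra ℝ (Matrix (Fin n) (Fin n) ℝ) := Matrix.linftyOpNormedAlgebra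
  letI : NormedAlgebra ℚ (Matrix (Fin n) (Fin n) ℝ) := NormedAlgebra.restrictScalars ℚ ℝ _
  have hcont : Continuous (Matrix.toEuclideanCLM (𝕜 := ℝ) (n := Fin n)) := by
    let L : Matrix (Fin n) (Fin n) ℝ →ₗ[ℝ] (EuclideanSpace ℝ (Fin n) →L[ℝ] EuclideanSpace ℝ (Fin n)) :=
      { toFun := fun B => Matrix.toEuclideanCLM (𝕜 := ℝ) B,
        map_add' := fun a b => map_add _ a b,
        map_smul' := fun a b => map_smul _ a b }
    exact L.continuous_of_finiteDimensional
  have h := NormedSpace.map_exp (Matrix.toEuclideanCLM (𝕜 := ℝ) (n := Fin n)) hcont A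
  have h2 : Matrix.toEuclideanCLM (𝕜 := ℝ) (NormedSpace.exp A) x
      = NormedSpace.exp (Matrix.toEuclideanCLM (𝕜 := ℝ) A) x := by exact congrArg (fun F => F x) h
  rw [← h2]
  rfl

lemma exp_apply_eig {n : ℕ} (T : EuclideanSpace ℝ (Fin n) →L[ℝ] EuclideanSpace ℝ (Fin n))
    (v : EuclideanSpace ℝ (Fin n)) (μ : ℝ) (h : T v = μ • v) :
    NormedSpace.exp T v = Real.exp μ • v := by
  have hpow : ∀ k : ℕ, (T ^ k) v = μ ^ k • v := by
    intro k; induction k with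
    | zero => simp
    | succ k ih =>
      rw [pow_succ, pow_succ]
      calc (T ^ k * T) v = (T ^ k) (T v) := rfl
      _ = (T ^ k) (μ • v) := by rw [h]
      _ = μ • ((T ^ k) v) := (T ^ k).map_smul μ v
      _ = (μ ^ k * μ) • v := by rw [ih, smul_smul, mul_comm]
  have hs : Summable fun k : ℕ => ((k.factorial : ℝ))⁻¹ • T ^ k :=
    NormedSpace.expSeries_summable' (𝕂 := ℝ) T
  have := (ContinuousLinearMap.apply ℝ (EuclideanSpace ℝ (Fin n)) v).map_tsum hs
  rw [NormedSpace.exp_eq_tsum ℝ]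
  simp only [ContinuousLinearMap.apply_apply] at this
  rw [this]
  have : ∀ k : ℕ, ((k.factorial : ℝ))⁻¹ • (T ^ k) v = (((k.factorial : ℝ))⁻¹ * μ ^ k) • v := by
    intro k; rw [hpow k, smul_smul]
  simp_rw [ContinuousLinearMap.coe_smul', Pi.smul_apply, this]
  rw [Summable.tsum_smul_const]
  · congr 1
    rw [Real.exp_eq_exp_ℝ, NormedSpace.exp_eq_tsum ℝ]
    simp [smul_eq_mul]
  · exact (NormedSpace.expSeries_summable' (𝕂 := ℝ) μ).congr (fun k => by simp [smul_eq_mul])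

lemma euc_norm_le {n : ℕ} (z z' : EuclideanSpace ℝ (Fin n)) (h : ∀ i, |z i| ≤ |z' i|) :
    ‖z‖ ≤ ‖z'‖ := by
  rw [EuclideanSpace.norm_eq, EuclideanSpace.norm_eq]
  apply Real.sqrt_le_sqrt
  apply Finset.sum_le_sum
  intro i _
  rw [Real.norm_eq_abs, Real.norm_eq_abs]
  exact pow_le_pow_left₀ (abs_nonneg _) (h i) 2

set_option maxHeartbeats 1000000 in
lemma converge_main {n : ℕ} (hn : 2 ≤ n) (M : Matrix (Fin n) (Fin n) ℝ) (hM : M.IsSymm)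
    (lam1 : ℝ)
    (hmax : ∀ mu : ℝ, Module.End.HasEigenvalue (Matrix.toEuclideanLin M) mu → mu ≤ lam1)
    (hsimple : Module.finrank ℝ
      (Module.End.eigenspace (Matrix.toEuclideanLin M) lam1) = 1)
    (xstar : EuclideanSpace ℝ (Fin n)) (hxstar : ‖xstar‖ = 1)
    (hxstarEig : Matrix.toEuclideanLin M xstar = lam1 • xstar)
    (x₀ : EuclideanSpace ℝ (Fin n)) (hc : ⟪xstar, x₀⟫ ≠ 0) :
    Tendsto (fun t : ℝ =>
          min ‖(‖toE ((NormedSpace.exp (t • M)).mulVec x₀)‖)⁻¹ •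
                  toE ((NormedSpace.exp (t • M)).mulVec x₀) - xstar‖
              ‖(‖toE ((NormedSpace.exp (t • M)).mulVec x₀)‖)⁻¹ •
                  toE ((NormedSpace.exp (t • M)).mulVec x₀) + xstar‖)
        atTop (nhds 0) := by
  classical
  haveI : Nonempty (Fin n) := ⟨⟨0, by omega⟩⟩
  set T : EuclideanSpace ℝ (Fin n) →L[ℝ] EuclideanSpace ℝ (Fin n) := Matrix.toEuclideanCLM (𝕜 := ℝ) M with hT
  have hcoeT : (T : EuclideanSpace ℝ (Fin n) →ₗ[ℝ] EuclideanSpace ℝ (Fin n)) = Matrix.toEuclideanLin M :=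
    Matrix.coe_toEuclideanCLM_eq_toEuclideanLin M
  have hTapp : ∀ y : EuclideanSpace ℝ (Fin n), T y = Matrix.toEuclideanLin M y := fun y => by
    rw [← hcoeT]; rfl
  have hsym : (Matrix.toEuclideanLin M).IsSymmetric := by
    rw [← Matrix.isHermitian_iff_isSymmetric]
    rwa [Matrix.IsHermitian, Matrix.conjTranspose_eq_transpose_of_trivial]
  have hrank : Module.finrank ℝ (EuclideanSpace ℝ (Fin n)) = n := finrank_euclideanSpace_fin
  set b := hsym.eigenvectorBasis hrank with hb
  set μ : Fin n → ℝ := hsym.eigenvalues hrank with hμ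
  have hTb : ∀ i, T (b i) = μ i • b i := by
    intro i
    rw [hTapp]
    exact hsym.apply_eigenvectorBasis hrank i
  have hμle : ∀ i, μ i ≤ lam1 := by
    intro i
    exact hmax _ (hsym.hasEigenvalue_eigenvalues hrank i)
  have hx0 : xstar ≠ 0 := fun h => by simp [h] at hxstar
  have hEig : Module.End.eigenspace (Matrix.toEuclideanLin M) lam1 = Submodule.span ℝ {xstar} := by
    refine (Submodule.eq_of_le_of_finrank_eq ?_ ?_).symm
    · rw [Submodule.span_le, Set.singleton_subset_iff]
      exact Module.End.mem_eigenspace_iff.mpr hxstarEig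
    · rw [finrank_span_singleton hx0, hsimple]
  have hbspan : ∀ i, μ i = lam1 → ∃ a : ℝ, b i = a • xstar := by
    intro i hi
    have : b i ∈ Module.End.eigenspace (Matrix.toEuclideanLin M) lam1 := by
      rw [Module.End.mem_eigenspace_iff, ← hTapp, hTb i, hi]
    rw [hEig, Submodule.mem_span_singleton] at this
    obtain ⟨a, ha⟩ := this
    exact ⟨a, ha.symm⟩
  -- the orthogonal part
  set c : ℝ := ⟪xstar, x₀⟫ with hcdef
  set w : EuclideanSpace ℝ (Fin n) := x₀ - c • xstar with hw
  have hwx : ⟪xstar, w⟫ = 0 := by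
    rw [hw, inner_sub_right, real_inner_smul_right, real_inner_self_eq_norm_sq, hxstar]
    ring
  have hbw : ∀ i, μ i = lam1 → ⟪b i, w⟫ = 0 := by
    intro i hi
    obtain ⟨a, ha⟩ := hbspan i hi
    rw [ha, real_inner_smul_left, hwx, mul_zero]
  -- second largest eigenvalue bound
  set lam2 : ℝ := Finset.univ.sup' Finset.univ_nonempty
    (fun i => if μ i = lam1 then lam1 - 1 else μ i) with hlam2
  have hlam2lt : lam2 < lam1 := by
    rw [hlam2, Finset.sup'_lt_iff]
    intro i _
    by_cases hi : μ i = lam1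
    · simp [hi]
    · simp [hi]
      exact lt_of_le_of_ne (hμle i) hi
  have hμlam2 : ∀ i, μ i ≠ lam1 → μ i ≤ lam2 := by
    intro i hi
    have := Finset.le_sup' (f := fun i => if μ i = lam1 then lam1 - 1 else μ i)
      (Finset.mem_univ i)
    rwa [if_neg hi] at this
    -- expansion of exp (t • T) w
  have hexp_b : ∀ (t : ℝ) (i : Fin n),
      NormedSpace.exp (t • T) (b i) = Real.exp (t * μ i) • b i := by
    intro t i
    apply exp_apply_eig
    rw [ContinuousLinearMap.smul_apply, hTb i, smul_smul]
  have horth := b.orthonormal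
  rw [orthonormal_iff_ite] at horth
  have hexp_w : ∀ t : ℝ, NormedSpace.exp (t • T) w
      = ∑ i, (Real.exp (t * μ i) * ⟪b i, w⟫) • b i := by
    intro t
    conv_lhs => rw [← b.sum_repr w]
    rw [map_sum]
    refine Finset.sum_congr rfl fun i _ => ?_
    rw [b.repr_apply_apply, (NormedSpace.exp (t • T)).map_smul, hexp_b, smul_smul, mul_comm]
  have hinner_exp : ∀ (t : ℝ) (j : Fin n),
      ⟪b j, NormedSpace.exp (t • T) w⟫ = Real.exp (t * μ j) * ⟪b j, w⟫ := by
    intro t j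
    rw [hexp_w, inner_sum]
    simp_rw [real_inner_smul_right, horth]
    simp [Finset.sum_ite_eq]
  -- norm bound
  have hbound : ∀ t : ℝ, 0 ≤ t →
      ‖NormedSpace.exp (t • T) w‖ ≤ Real.exp (t * lam2) * ‖w‖ := by
    intro t ht
    have h1 : ‖NormedSpace.exp (t • T) w‖ = ‖b.repr (NormedSpace.exp (t • T) w)‖ :=
      (b.repr.norm_map _).symm
    have h2 : ‖w‖ = ‖b.repr w‖ := (b.repr.norm_map _).symm
    rw [h1, h2]
    have h3 : Real.exp (t * lam2) * ‖b.repr w‖ = ‖Real.exp (t * lam2) • b.repr w‖ := by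
      rw [norm_smul, Real.norm_eq_abs, abs_of_pos (Real.exp_pos _)]
    rw [h3]
    apply euc_norm_le
    intro j
    have hrepr : b.repr (NormedSpace.exp (t • T) w) j = Real.exp (t * μ j) * ⟪b j, w⟫ := by
      rw [b.repr_apply_apply, hinner_exp]
    have hrepr2 : (Real.exp (t * lam2) • b.repr w) j = Real.exp (t * lam2) * ⟪b j, w⟫ := by
      rw [PiLp.smul_apply, b.repr_apply_apply, smul_eq_mul]
    rw [hrepr, hrepr2]
    by_cases hj : μ j = lam1
    · rw [hbw j hj, mul_zero, mul_zero]
    · rw [abs_mul, abs_mul]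
      apply mul_le_mul_of_nonneg_right _ (abs_nonneg _)
      rw [abs_of_pos (Real.exp_pos _), abs_of_pos (Real.exp_pos _)]
      exact Real.exp_le_exp.mpr (mul_le_mul_of_nonneg_left (hμlam2 j hj) ht)
  -- the renormalized flow
  have hTx : T xstar = lam1 • xstar := by rw [hTapp]; exact hxstarEig
  have hexp_xstar : ∀ t : ℝ, NormedSpace.exp (t • T) xstar = Real.exp (t * lam1) • xstar := by
    intro t
    apply exp_apply_eig
    rw [ContinuousLinearMap.smul_apply, hTx, smul_smul]
  have hx0split : x₀ = c • xstar + w := by rw [hw]; abel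
  set u : ℝ → EuclideanSpace ℝ (Fin n) := fun t =>
    Real.exp (-(t * lam1)) • NormedSpace.exp (t • T) x₀ with hu
  have huval : ∀ t : ℝ, u t = c • xstar + Real.exp (-(t * lam1)) • NormedSpace.exp (t • T) w := by
    intro t
    rw [hu]
    simp only
    conv_lhs => rw [hx0split]
    rw [map_add, (NormedSpace.exp (t • T)).map_smul, hexp_xstar, smul_add, smul_smul, smul_smul]
    congr 1
    rw [show Real.exp (-(t * lam1)) * c * Real.exp (t * lam1)
        = c * Real.exp (-(t * lam1) + t * lam1) by rw [Real.exp_add]; ring]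
    simp
  have hulim : Tendsto u atTop (nhds (c • xstar)) := by
    have hz : Tendsto (fun t => Real.exp (-(t * lam1)) • NormedSpace.exp (t • T) w)
        atTop (nhds 0) := by
      apply squeeze_zero_norm' (a := fun t => Real.exp (t * (lam2 - lam1)) * ‖w‖)
      · filter_upwards [eventually_ge_atTop (0:ℝ)] with t ht
        rw [norm_smul, Real.norm_eq_abs, abs_of_pos (Real.exp_pos _)]
        calc Real.exp (-(t * lam1)) * ‖NormedSpace.exp (t • T) w‖
            ≤ Real.exp (-(t * lam1)) * (Real.exp (t * lam2) * ‖w‖) :=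
              mul_le_mul_of_nonneg_left (hbound t ht) (Real.exp_pos _).le
          _ = Real.exp (t * (lam2 - lam1)) * ‖w‖ := by
              rw [← mul_assoc, ← Real.exp_add]; ring_nf
      · have h1 : Tendsto (fun t : ℝ => t * (lam2 - lam1)) atTop atBot :=
          tendsto_id.atTop_mul_const_of_neg (by linarith)
        have := Real.tendsto_exp_atBot.comp h1
        simpa using this.mul_const ‖w‖
    have := hz.const_add (c • xstar)
    simp only [add_zero] at this
    apply this.congr
    intro t
    rw [huval t]
  -- normalization map
  have hcx0 : c • xstar ≠ 0 := smul_ne_zero hc hx0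
  set N : EuclideanSpace ℝ (Fin n) → EuclideanSpace ℝ (Fin n) := fun y => ‖y‖⁻¹ • y with hN
  have hNcont : ContinuousAt N (c • xstar) := by
    apply ContinuousAt.fun_smul
    · exact (continuous_norm.continuousAt).inv₀ (norm_ne_zero_iff.mpr hcx0)
    · exact continuousAt_id
  have hNscale : ∀ (a : ℝ), 0 < a → ∀ z : EuclideanSpace ℝ (Fin n), N (a • z) = N z := by
    intro a ha z
    rcases eq_or_ne z 0 with rfl | hz
    · rw [smul_zero]
    · show (‖a • z‖)⁻¹ • (a • z) = (‖z‖)⁻¹ • z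
      rw [norm_smul, Real.norm_eq_abs, abs_of_pos ha, smul_smul]
      congr 1
      rw [mul_inv, mul_comm a⁻¹, mul_assoc, inv_mul_cancel₀ ha.ne', mul_one]
  have hNu : ∀ t : ℝ, N (NormedSpace.exp (t • T) x₀) = N (u t) := by
    intro t
    rw [hu]
    exact (hNscale (Real.exp (-(t * lam1))) (Real.exp_pos _)
      (NormedSpace.exp (t • T) x₀)).symm
  have hNlim : Tendsto (fun t : ℝ => N (NormedSpace.exp (t • T) x₀)) atTop (nhds (N (c • xstar))) := by
    have := hNcont.tendsto.comp hulim
    apply this.congr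
    intro t
    exact (hNu t).symm
  -- identify the limit
  have hlimit_pm : N (c • xstar) = xstar ∨ N (c • xstar) = -xstar := by
    rw [hN]
    simp only [norm_smul, Real.norm_eq_abs, hxstar, mul_one, smul_smul]
    rcases lt_or_gt_of_ne hc with hneg | hpos
    · right
      rw [abs_of_neg hneg]
      rw [show (-c)⁻¹ * c = -1 by field_simp]
      simp
    · left
      rw [abs_of_pos hpos]
      rw [show c⁻¹ * c = 1 by field_simp]
      simp
  -- conclude
  have hfun : ∀ t : ℝ, toE ((NormedSpace.exp (t • M)).mulVec x₀)
      = NormedSpace.exp (t • T) x₀ := by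
    intro t
    rw [exp_mulVec, hT, _root_.map_smul]
  have hmin0 : min ‖N (c • xstar) - xstar‖ ‖N (c • xstar) + xstar‖ = 0 := by
    rcases hlimit_pm with h | h <;> rw [h] <;> simp [min_eq_left, min_eq_right]
  have hcont2 : Continuous fun y : EuclideanSpace ℝ (Fin n) => min ‖y - xstar‖ ‖y + xstar‖ :=
    ((continuous_id.sub continuous_const).norm).min ((continuous_id.add continuous_const).norm)
  have := (hcont2.continuousAt).tendsto.comp hNlim
  rw [hmin0] at this
  apply this.congr
  intro t
  simp only [Function.comp_apply]
  rw [hfun t]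

lemma sphere_hyperplane_null {n : ℕ} (hn : 2 ≤ n) (xstar : EuclideanSpace ℝ (Fin n))
    (hxstar : ‖xstar‖ = 1) :
    μH[(n : ℝ) - 1] {x : EuclideanSpace ℝ (Fin n) | ‖x‖ = 1 ∧ ⟪xstar, x⟫ = 0} = 0 := by
  classical
  have hx0 : xstar ≠ 0 := fun h => by simp [h] at hxstar
  set V : Submodule ℝ (EuclideanSpace ℝ (Fin n)) := (Submodule.span ℝ {xstar})ᗮ with hV
  set m : ℕ := n - 1 with hm
  have hm1 : 1 ≤ m := by omega
  haveI : Nonempty (Fin m) := ⟨⟨0, by omega⟩⟩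
  have hdim : Module.finrank ℝ V = m := by
    have h1 := Submodule.finrank_add_finrank_orthogonal (𝕜 := ℝ) (Submodule.span ℝ {xstar})
    rw [finrank_span_singleton hx0, finrank_euclideanSpace_fin] at h1
    rw [← hV] at h1
    omega
  set b : OrthonormalBasis (Fin m) ℝ V :=
    (stdOrthonormalBasis ℝ V).reindex (finCongr hdim) with hb
  set L : EuclideanSpace ℝ (Fin m) →ₗᵢ[ℝ] EuclideanSpace ℝ (Fin n) :=
    V.subtypeₗᵢ.comp b.repr.symm.toLinearIsometry with hL
  have hLmem : ∀ z, (L z : EuclideanSpace ℝ (Fin n)) ∈ V := fun z => (b.repr.symm z).2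
  have hset : {x : EuclideanSpace ℝ (Fin n) | ‖x‖ = 1 ∧ ⟪xstar, x⟫ = 0}
      = L '' (Metric.sphere 0 1) := by
    ext x
    constructor
    · rintro ⟨hx1, hx2⟩
      have hxV : x ∈ V := by
        rw [hV]
        exact Submodule.mem_orthogonal_singleton_iff_inner_left.mpr (by rw [real_inner_comm]; exact hx2)
      refine ⟨b.repr ⟨x, hxV⟩, ?_, ?_⟩
      · rw [mem_sphere_zero_iff_norm, b.repr.norm_map]
        exact hx1
      · simp [hL]
    · rintro ⟨z, hz, rfl⟩
      rw [mem_sphere_zero_iff_norm] at hz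
      constructor
      · rw [L.norm_map]; exact hz
      · have := hLmem z
        rw [hV] at this
        have := Submodule.mem_orthogonal_singleton_iff_inner_left.mp this
        rw [real_inner_comm] at this
        exact this
  have hd0 : (0:ℝ) ≤ (n : ℝ) - 1 := by
    have : (2:ℝ) ≤ (n:ℝ) := by exact_mod_cast hn
    linarith
  rw [hset, L.isometry.hausdorffMeasure_image (Or.inl hd0)]
  -- now the sphere in EuclideanSpace ℝ (Fin m)
  have hcast : (n : ℝ) - 1 = (m : ℝ) := by
    rw [hm]
    push_cast [Nat.cast_sub (by omega : 1 ≤ n)]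
    ring
  rw [hcast]
  -- compare with the sup-norm pi space
  set f : (Fin m → ℝ) → EuclideanSpace ℝ (Fin m) := WithLp.toLp 2 with hf
  have ha := PiLp.antilipschitzWith_ofLp 2 (fun _ : Fin m => ℝ)
  have hlip := ha.to_rightInverse (WithLp.ofLp_toLp 2)
  set S : Set (Fin m → ℝ) := f ⁻¹' (Metric.sphere 0 1) with hS
  have himg : Metric.sphere (0 : EuclideanSpace ℝ (Fin m)) 1 = f '' S := by
    rw [hS, Set.image_preimage_eq _ (fun y => ⟨WithLp.ofLp y, rfl⟩)]
  haveI : Nontrivial (EuclideanSpace ℝ (Fin m)) := by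
    refine ⟨0, EuclideanSpace.single ⟨0, by omega⟩ 1, ?_⟩
    intro h
    have := congrArg (fun z => ‖z‖) h
    simp at this
  have hvol : volume S = 0 := by
    have hmp : MeasurePreserving (WithLp.toLp 2 : (Fin m → ℝ) → EuclideanSpace ℝ (Fin m))
        (volume : Measure (Fin m → ℝ)) (volume : Measure (EuclideanSpace ℝ (Fin m))) :=
      PiLp.volume_preserving_toLp (Fin m)
    have hfeq : S = (WithLp.toLp 2 : (Fin m → ℝ) → EuclideanSpace ℝ (Fin m)) ⁻¹' (Metric.sphere 0 1) := rfl
    rw [hfeq, hmp.measure_preimage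
      (Metric.isClosed_sphere.measurableSet.nullMeasurableSet)]
    exact Measure.addHaar_sphere volume 0 1
  have hmH : (μH[(m:ℝ)] : Measure (Fin m → ℝ)) = volume := by
    have := MeasureTheory.hausdorffMeasure_pi_real (ι := Fin m)
    rwa [Fintype.card_fin] at this
  have hd0m : (0:ℝ) ≤ (m:ℝ) := by positivity
  have hle := hlip.hausdorffMeasure_image_le hd0m S
  rw [hmH, hvol, mul_zero] at hle
  rw [himg]
  exact le_antisymm hle bot_le

/-- **Almost sure convergence to one of the two poles.**
Let `M` be a real symmetric matrix whose largest eigenvalue `lam1` is simple,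
and let `x⋆` be a unit eigenvector for `lam1`.  Then, for all unit initial
conditions `x₀` outside a set which is null for the `(n-1)`-dimensional
Hausdorff (surface) measure on the sphere, the solution
`x t = e^{tM} x₀ / ‖e^{tM} x₀‖` of the spherical gradient flow satisfies
`min(‖x t - x⋆‖, ‖x t + x⋆‖) → 0` as `t → ∞`. -/
theorem stmt4 {n : ℕ} (hn : 2 ≤ n) (M : Matrix (Fin n) (Fin n) ℝ) (hM : M.IsSymm)
    (lam1 : ℝ) (hlam1 : Module.End.HasEigenvalue (Matrix.toEuclideanLin M) lam1)
    (hmax : ∀ mu : ℝ, Module.End.HasEigenvalue (Matrix.toEuclideanLin M) mu → mu ≤ lam1)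
    (hsimple : Module.finrank ℝ
      (Module.End.eigenspace (Matrix.toEuclideanLin M) lam1) = 1)
    (xstar : EuclideanSpace ℝ (Fin n)) (hxstar : ‖xstar‖ = 1)
    (hxstarEig : Matrix.toEuclideanLin M xstar = lam1 • xstar) :
    μH[(n : ℝ) - 1] {x₀ : EuclideanSpace ℝ (Fin n) | ‖x₀‖ = 1 ∧
      ¬ Tendsto (fun t : ℝ =>
          min ‖(‖toE ((NormedSpace.exp (t • M)).mulVec x₀)‖)⁻¹ •
                  toE ((NormedSpace.exp (t • M)).mulVec x₀) - xstar‖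
              ‖(‖toE ((NormedSpace.exp (t • M)).mulVec x₀)‖)⁻¹ •
                  toE ((NormedSpace.exp (t • M)).mulVec x₀) + xstar‖)
        atTop (nhds 0)} = 0 := by
  apply measure_mono_null ?_ (sphere_hyperplane_null hn xstar hxstar)
  rintro x₀ ⟨hx1, hx2⟩
  refine ⟨hx1, ?_⟩
  by_contra h
  exact hx2 (converge_main hn M hM lam1 hmax hsimple xstar hxstar hxstarEig x₀ h)
end

section
/- Let n ≥ 2 and let f : ℝ^n → ℝ be twice continuously differentiable. Then for every x ∈ ℝ^n with ‖x‖ = 1, Σ_{i,j,k,l=1}^n ∂_i( V^i_{jk} · ∂_l( V^l_{jk} f ) )(x) = Σ_{i,j,l=1}^n ∂_i( V̂^i_j · ∂_l( V̂^l_j f ) )(x). That is, the 'diagonal' part L^d of the Fokker–Planck operator of the Random Quadratic Form coincides pointwise on the unit sphere with the Fokker–Planck operator L* of spherical Brownian motion. -/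
/-- The partial derivative `∂_i g` of `g : ℝⁿ → ℝ` with respect to the `i`-th
Euclidean coordinate. -/
noncomputable def pd {n : ℕ} (i : Fin n) (g : EuclideanSpace ℝ (Fin n) → ℝ)
    (x : EuclideanSpace ℝ (Fin n)) : ℝ :=
  fderiv ℝ g x (EuclideanSpace.single i (1 : ℝ))

/-- Diffusion coefficients `V^i_{jk}(x) = (δ_{ij} - x_i x_j) x_k` of the
Random Quadratic Form, in Euclidean coordinates. -/
def Vc {n : ℕ} (i j k : Fin n) (x : EuclideanSpace ℝ (Fin n)) : ℝ :=
  ((if i = j then (1 : ℝ) else 0) - x i * x j) * x k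

/-- Diffusion coefficients `V̂^i_j(x) = δ_{ij} - x_i x_j` of spherical
Brownian motion, in Euclidean coordinates. -/
def Vhat {n : ℕ} (i j : Fin n) (x : EuclideanSpace ℝ (Fin n)) : ℝ :=
  (if i = j then (1 : ℝ) else 0) - x i * x j


variable {n : ℕ}
local notation "E" => EuclideanSpace ℝ (Fin n)

lemma diff_coord (j : Fin n) : Differentiable ℝ (fun y : E => y j) :=
  (EuclideanSpace.proj (𝕜 := ℝ) j).differentiable

lemma contDiff_coord (j : Fin n) : ContDiff ℝ 2 (fun y : E => y j) :=
  (EuclideanSpace.proj (𝕜 := ℝ) j).contDiff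

lemma pd_coord (i j : Fin n) (x : E) :
    pd i (fun y : E => y j) x = if i = j then 1 else 0 := by
  have h : (fun y : E => y j) = EuclideanSpace.proj (𝕜 := ℝ) j := rfl
  rw [pd, h, (EuclideanSpace.proj (𝕜 := ℝ) j).fderiv]
  simp [EuclideanSpace.single_apply, eq_comm]

lemma pd_mul (i : Fin n) (g h : E → ℝ) (x : E)
    (hg : DifferentiableAt ℝ g x) (hh : DifferentiableAt ℝ h x) :
    pd i (fun y => g y * h y) x = pd i g x * h x + g x * pd i h x := by
  rw [pd, fderiv_fun_mul hg hh]; simp [pd]; ring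

lemma pd_add (i : Fin n) (g h : E → ℝ) (x : E)
    (hg : DifferentiableAt ℝ g x) (hh : DifferentiableAt ℝ h x) :
    pd i (fun y => g y + h y) x = pd i g x + pd i h x := by
  rw [pd, fderiv_fun_add hg hh]; simp [pd]

lemma pd_sub (i : Fin n) (g h : E → ℝ) (x : E)
    (hg : DifferentiableAt ℝ g x) (hh : DifferentiableAt ℝ h x) :
    pd i (fun y => g y - h y) x = pd i g x - pd i h x := by
  rw [pd, fderiv_fun_sub hg hh]; simp [pd]

lemma pd_const (i : Fin n) (c : ℝ) (x : E) : pd i (fun _ : E => c) x = 0 := by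
  rw [pd, fderiv_fun_const]; simp

lemma pd_sum (i : Fin n) (g : Fin n → E → ℝ) (x : E)
    (hg : ∀ k, DifferentiableAt ℝ (g k) x) :
    pd i (fun y => ∑ k, g k y) x = ∑ k, pd i (g k) x := by
  rw [pd, fderiv_fun_sum (fun k _ => hg k)]; simp [pd]

lemma diff_pd (l : Fin n) (g : E → ℝ) (hg : ContDiff ℝ 2 g) :
    Differentiable ℝ (fun y => pd l g y) := by
  have h1 : ContDiff ℝ 1 (fderiv ℝ g) := hg.fderiv_right (le_refl _)
  exact (ContinuousLinearMap.apply ℝ ℝ (EuclideanSpace.single l (1:ℝ))).differentiable.comp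
    (h1.differentiable (by norm_num))

lemma contDiff_Vhat (a b : Fin n) : ContDiff ℝ 2 (Vhat a b) :=
  contDiff_const.sub ((contDiff_coord a).mul (contDiff_coord b))

lemma diff_Vhat (a b : Fin n) : Differentiable ℝ (Vhat a b) :=
  (contDiff_Vhat a b).differentiable (by norm_num)

lemma pd_Vhat (i a b : Fin n) (x : E) :
    pd i (Vhat a b) x
      = -((if i = a then (1:ℝ) else 0) * x b + x a * (if i = b then 1 else 0)) := by
  have h : Vhat a b = fun y : E => (if a = b then (1:ℝ) else 0) - y a * y b := rfl
  rw [h, pd_sub i _ _ x (differentiableAt_const _)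
    (((diff_coord a) x).fun_mul ((diff_coord b) x)),
    pd_const, pd_mul i _ _ x ((diff_coord a) x) ((diff_coord b) x), pd_coord, pd_coord]
  ring

lemma diff_sq : Differentiable ℝ (fun y : E => ∑ m, y m * y m) :=
  Differentiable.fun_sum fun m _ => (diff_coord m).fun_mul (diff_coord m)

lemma pd_sq (i : Fin n) (x : E) : pd i (fun y : E => ∑ m, y m * y m) x = 2 * x i := by
  rw [pd_sum i _ x (fun k => ((diff_coord k).fun_mul (diff_coord k)) x)]
  have h : ∀ k, pd i (fun y : E => y k * y k) x
      = (if i = k then (1:ℝ) else 0) * x k + x k * (if i = k then 1 else 0) := fun k => by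
    rw [pd_mul i _ _ x ((diff_coord k) x) ((diff_coord k) x), pd_coord]
  simp only [h, ite_mul, mul_ite, one_mul, mul_one, zero_mul, mul_zero]
  rw [Finset.sum_add_distrib, Finset.sum_ite_eq]
  simp [two_mul]

-- Stage A : pointwise identity
lemma stepA (f : E → ℝ) (hf : ContDiff ℝ 2 f) (i j l : Fin n) (y : E) :
    ∑ k, Vc i j k y * pd l (fun z => Vc l j k z * f z) y
      = Vhat i j y * ((∑ m, y m * y m) * pd l (fun z => Vhat l j z * f z) y
          + y l * (Vhat l j y * f y)) := by
  have df : Differentiable ℝ f := hf.differentiable (by norm_num)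
  have hG : Differentiable ℝ (fun z : E => Vhat l j z * f z) := (diff_Vhat l j).mul df
  have hk : ∀ k, pd l (fun z => Vc l j k z * f z) y
      = pd l (fun z => Vhat l j z * f z) y * y k
        + (Vhat l j y * f y) * (if l = k then 1 else 0) := by
    intro k
    have h : (fun z : E => Vc l j k z * f z) = fun z : E => (Vhat l j z * f z) * z k :=
      funext fun z => by simp only [Vc, Vhat]; ring
    rw [h, pd_mul l _ _ y (hG y) ((diff_coord k) y), pd_coord]
  have hVc : ∀ k, Vc i j k y = Vhat i j y * y k := fun k => by simp [Vc, Vhat]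
  simp only [hk, hVc, mul_add]
  rw [Finset.sum_add_distrib]
  have h1 : ∑ k, Vhat i j y * y k * (pd l (fun z => Vhat l j z * f z) y * y k)
      = Vhat i j y * ((∑ m, y m * y m) * pd l (fun z => Vhat l j z * f z) y) := by
    rw [Finset.sum_mul, Finset.mul_sum]
    exact Finset.sum_congr rfl fun k _ => by ring
  have h2 : ∑ k, Vhat i j y * y k * (Vhat l j y * f y * (if l = k then 1 else 0))
      = Vhat i j y * (y l * (Vhat l j y * f y)) := by
    simp only [mul_ite, mul_one, mul_zero]
    rw [Finset.sum_ite_eq]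
    simp [mul_assoc]
  rw [h1, h2]

lemma contDiff_Vc (a b c : Fin n) : ContDiff ℝ 2 (Vc a b c) :=
  (contDiff_Vhat a b).mul (contDiff_coord c)

lemma diff_Vc (a b c : Fin n) : Differentiable ℝ (Vc a b c) :=
  (contDiff_Vc a b c).differentiable (by norm_num)

lemma algebra {n : ℕ} (x d : Fin n → ℝ) (F : ℝ) (hx' : ∑ k, x k * x k = 1) :
    ∑ i, ∑ j, ∑ l,
      ( -(x j + x i * (if i = j then (1:ℝ) else 0)) *
            (x l * (((if l = j then (1:ℝ) else 0) - x l * x j) * F))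
        + ((if i = j then (1:ℝ) else 0) - x i * x j) *
            ( 2 * x i * ( -(x j + x l * (if l = j then 1 else 0)) * F
                + ((if l = j then (1:ℝ) else 0) - x l * x j) * d l )
            + ((if i = l then (1:ℝ) else 0) * (((if l = j then (1:ℝ) else 0) - x l * x j) * F)
              + x l * ( -((if i = l then (1:ℝ) else 0) * x j + x l * (if i = j then 1 else 0)) * F
                  + ((if l = j then (1:ℝ) else 0) - x l * x j) * d i )) ) ) = 0 := by
  classical
  set S : ℝ := ∑ m, x m * d m with hS
  have inner : ∀ i j : Fin n,
      (∑ l, ( -(x j + x i * (if i = j then (1:ℝ) else 0)) *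
            (x l * (((if l = j then (1:ℝ) else 0) - x l * x j) * F))
        + ((if i = j then (1:ℝ) else 0) - x i * x j) *
            ( 2 * x i * ( -(x j + x l * (if l = j then 1 else 0)) * F
                + ((if l = j then (1:ℝ) else 0) - x l * x j) * d l )
            + ((if i = l then (1:ℝ) else 0) * (((if l = j then (1:ℝ) else 0) - x l * x j) * F)
              + x l * ( -((if i = l then (1:ℝ) else 0) * x j + x l * (if i = j then 1 else 0)) * F
                  + ((if l = j then (1:ℝ) else 0) - x l * x j) * d i )) ) ))
      = ((if i = j then (1:ℝ) else 0) - x i * x j) *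
          (x i * (2 * d j - 2 * x j * (((n:ℝ) + 2) * F + S))) := by
    intro i j
    set V : ℝ := (if i = j then (1:ℝ) else 0) - x i * x j with hV
    set u : ℝ := (x j + x i * (if i = j then (1:ℝ) else 0)) * F with hu
    have expand : ∀ l : Fin n,
        ( -(x j + x i * (if i = j then (1:ℝ) else 0)) *
            (x l * (((if l = j then (1:ℝ) else 0) - x l * x j) * F))
        + V *
            ( 2 * x i * ( -(x j + x l * (if l = j then 1 else 0)) * F
                + ((if l = j then (1:ℝ) else 0) - x l * x j) * d l )
            + ((if i = l then (1:ℝ) else 0) * (((if l = j then (1:ℝ) else 0) - x l * x j) * F)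
              + x l * ( -((if i = l then (1:ℝ) else 0) * x j + x l * (if i = j then 1 else 0)) * F
                  + ((if l = j then (1:ℝ) else 0) - x l * x j) * d i )) ) )
        = (V * (-2 * x i * x j * F))
          + (u * x j + V * (-((if i = j then (1:ℝ) else 0) * F) - x j * d i)) * (x l * x l)
          + (V * (-2 * x i * x j)) * (x l * d l)
          + (-u + V * (-2 * x i * F + d i)) * ((if l = j then (1:ℝ) else 0) * x l)
          + (V * (2 * x i)) * ((if l = j then (1:ℝ) else 0) * d l)
          + (V * (-2 * x j * F)) * ((if i = l then (1:ℝ) else 0) * x l)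
          + (V * F) * ((if i = l then (1:ℝ) else 0) * (if l = j then (1:ℝ) else 0)) := by
      intro l
      rw [hu]
      ring
    rw [Finset.sum_congr rfl (fun l _ => expand l)]
    rw [Finset.sum_add_distrib, Finset.sum_add_distrib, Finset.sum_add_distrib,
      Finset.sum_add_distrib, Finset.sum_add_distrib, Finset.sum_add_distrib]
    rw [Finset.sum_const, Finset.card_univ, Fintype.card_fin, nsmul_eq_mul]
    rw [← Finset.mul_sum, ← Finset.mul_sum, ← Finset.mul_sum, ← Finset.mul_sum,
      ← Finset.mul_sum, ← Finset.mul_sum]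
    have hj1 : ∑ l, (if l = j then (1:ℝ) else 0) * x l = x j := by simp
    have hj2 : ∑ l, (if l = j then (1:ℝ) else 0) * d l = d j := by simp
    have hi1 : ∑ l, (if i = l then (1:ℝ) else 0) * x l = x i := by simp
    have hij : ∑ l, (if i = l then (1:ℝ) else 0) * (if l = j then (1:ℝ) else 0)
        = (if i = j then (1:ℝ) else 0) := by
      simp [Finset.sum_ite_eq]
    rw [hx', hj1, hj2, hi1, hij, ← hS, hu, hV]
    ring
  rw [Finset.sum_congr rfl (fun i _ => Finset.sum_congr rfl (fun j _ => inner i j))]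
  rw [Finset.sum_comm]
  have outer : ∀ j : Fin n,
      (∑ i, ((if i = j then (1:ℝ) else 0) - x i * x j) *
          (x i * (2 * d j - 2 * x j * (((n:ℝ) + 2) * F + S)))) = 0 := by
    intro j
    set c : ℝ := 2 * d j - 2 * x j * (((n:ℝ) + 2) * F + S) with hc
    have expand : ∀ i : Fin n,
        ((if i = j then (1:ℝ) else 0) - x i * x j) * (x i * c)
          = ((if i = j then (1:ℝ) else 0) * x i) * c - (x j * c) * (x i * x i) := by
      intro i; ring
    rw [Finset.sum_congr rfl (fun i _ => expand i), Finset.sum_sub_distrib,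
      ← Finset.sum_mul, ← Finset.mul_sum]
    have h1 : ∑ i, (if i = j then (1:ℝ) else 0) * x i = x j := by simp
    rw [h1, hx']
    ring
  rw [Finset.sum_congr rfl (fun j _ => outer j)]
  simp


/-- **The diagonal part of the Fokker–Planck operator of the RQF coincides
with the Fokker–Planck operator of spherical Brownian motion.**
For every `C²` function `f : ℝⁿ → ℝ` and every unit vector `x`,
`Σ_{i,j,k,l} ∂_i(V^i_{jk} ∂_l(V^l_{jk} f))(x) = Σ_{i,j,l} ∂_i(V̂^i_j ∂_l(V̂^l_j f))(x)`. -/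
theorem stmt7 {n : ℕ} (hn : 2 ≤ n) (f : EuclideanSpace ℝ (Fin n) → ℝ)
    (hf : ContDiff ℝ 2 f) (x : EuclideanSpace ℝ (Fin n)) (hx : ‖x‖ = 1) :
    ∑ i, ∑ j, ∑ k, ∑ l,
        pd i (fun y => Vc i j k y * pd l (fun z => Vc l j k z * f z) y) x
      = ∑ i, ∑ j, ∑ l,
        pd i (fun y => Vhat i j y * pd l (fun z => Vhat l j z * f z) y) x := by
  classical
  have df : Differentiable ℝ f := hf.differentiable (by norm_num)
  have cG : ∀ j l : Fin n, ContDiff ℝ 2 (fun z : EuclideanSpace ℝ (Fin n) => Vhat l j z * f z) :=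
    fun j l => (contDiff_Vhat l j).mul hf
  have dG : ∀ j l : Fin n, Differentiable ℝ (fun z : EuclideanSpace ℝ (Fin n) => Vhat l j z * f z) :=
    fun j l => (cG j l).differentiable (by norm_num)
  have dP : ∀ j l : Fin n, Differentiable ℝ
      (fun y => pd l (fun z : EuclideanSpace ℝ (Fin n) => Vhat l j z * f z) y) :=
    fun j l => diff_pd l _ (cG j l)
  have dPc : ∀ j k l : Fin n, Differentiable ℝ
      (fun y => pd l (fun z : EuclideanSpace ℝ (Fin n) => Vc l j k z * f z) y) :=
    fun j k l => diff_pd l _ ((contDiff_Vc l j k).mul hf)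
  have hx' : ∑ k, x k * x k = 1 := by
    have h := EuclideanSpace.norm_eq x
    rw [hx] at h
    have h2 : ∑ i, ‖x i‖ ^ 2 = 1 := by
      have hnn : 0 ≤ ∑ i, ‖x i‖ ^ 2 := Finset.sum_nonneg fun i _ => sq_nonneg _
      nlinarith [Real.sq_sqrt hnn, Real.sqrt_nonneg (∑ i, ‖x i‖ ^ 2)]
    calc ∑ k, x k * x k = ∑ i, ‖x i‖ ^ 2 := by
          refine Finset.sum_congr rfl fun k _ => ?_
          rw [Real.norm_eq_abs, sq_abs, sq]
      _ = 1 := h2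
  -- closed form of the (i,j,l) difference term
  have key : ∀ i j l : Fin n,
      (∑ k, pd i (fun y => Vc i j k y * pd l (fun z => Vc l j k z * f z) y) x)
        - pd i (fun y => Vhat i j y * pd l (fun z => Vhat l j z * f z) y) x
      = -(x j + x i * (if i = j then 1 else 0)) *
            (x l * (((if l = j then (1:ℝ) else 0) - x l * x j) * f x))
        + ((if i = j then (1:ℝ) else 0) - x i * x j) *
            ( 2 * x i * ( -(x j + x l * (if l = j then 1 else 0)) * f x
                + ((if l = j then (1:ℝ) else 0) - x l * x j) * pd l f x )
            + ((if i = l then (1:ℝ) else 0) * (((if l = j then (1:ℝ) else 0) - x l * x j) * f x)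
              + x l * ( -((if i = l then (1:ℝ) else 0) * x j + x l * (if i = j then 1 else 0)) * f x
                  + ((if l = j then (1:ℝ) else 0) - x l * x j) * pd i f x )) ) := by
    intro i j l
    have e1 : (∑ k, pd i (fun y => Vc i j k y * pd l (fun z => Vc l j k z * f z) y) x)
        = pd i (fun y => ∑ k, Vc i j k y * pd l (fun z => Vc l j k z * f z) y) x :=
      (pd_sum i _ x (fun k => ((diff_Vc i j k x).mul ((dPc j k l) x)))).symm
    rw [e1, funext (stepA f hf i j l)]
    rw [← pd_sub i _ _ x
      ((diff_Vhat i j x).fun_mul (((diff_sq x).fun_mul ((dP j l) x)).fun_add (((diff_coord l) x).fun_mul ((dG j l) x))))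
      ((diff_Vhat i j x).fun_mul ((dP j l) x))]
    have e4 : (fun y => Vhat i j y * ((∑ m, y m * y m) * pd l (fun z => Vhat l j z * f z) y
            + y l * (Vhat l j y * f y))
          - Vhat i j y * pd l (fun z => Vhat l j z * f z) y)
        = fun y => Vhat i j y * (((∑ m, y m * y m) - 1) * pd l (fun z => Vhat l j z * f z) y
            + y l * (Vhat l j y * f y)) := funext fun y => by ring
    rw [e4]
    rw [pd_mul i (Vhat i j) _ x (diff_Vhat i j x)
      ((((diff_sq.fun_sub (differentiable_const 1)) x).fun_mul ((dP j l) x)).fun_add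
        (((diff_coord l) x).fun_mul ((dG j l) x)))]
    rw [pd_add i _ _ x (((diff_sq.fun_sub (differentiable_const 1)) x).fun_mul ((dP j l) x))
      (((diff_coord l) x).fun_mul ((dG j l) x))]
    rw [pd_mul i (fun y => (∑ m, y m * y m) - 1) _ x ((diff_sq.fun_sub (differentiable_const 1)) x)
      ((dP j l) x)]
    rw [pd_mul i (fun y => y l) _ x ((diff_coord l) x) ((dG j l) x)]
    rw [pd_sub i _ _ x (diff_sq x) (differentiableAt_const 1), pd_sq, pd_const, pd_coord]
    rw [pd_mul i (Vhat l j) f x (diff_Vhat l j x) (df x)]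
    rw [pd_mul l (Vhat l j) f x (diff_Vhat l j x) (df x)]
    rw [pd_Vhat, pd_Vhat, pd_Vhat]
    simp only [eq_self_iff_true, if_true, Vhat, hx', zero_mul, mul_zero, add_zero, zero_add]
    ring
  have halg : ∑ i, ∑ j, ∑ l : Fin n,
      ( -(x j + x i * (if i = j then (1:ℝ) else 0)) *
            (x l * (((if l = j then (1:ℝ) else 0) - x l * x j) * f x))
        + ((if i = j then (1:ℝ) else 0) - x i * x j) *
            ( 2 * x i * ( -(x j + x l * (if l = j then 1 else 0)) * f x
                + ((if l = j then (1:ℝ) else 0) - x l * x j) * pd l f x )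
            + ((if i = l then (1:ℝ) else 0) * (((if l = j then (1:ℝ) else 0) - x l * x j) * f x)
              + x l * ( -((if i = l then (1:ℝ) else 0) * x j + x l * (if i = j then 1 else 0)) * f x
                  + ((if l = j then (1:ℝ) else 0) - x l * x j) * pd i f x )) ) ) = 0 :=
    algebra (fun k => x k) (fun m => pd m f x) (f x) hx'
  have swap : ∀ i j : Fin n,
      (∑ k, ∑ l, pd i (fun y => Vc i j k y * pd l (fun z => Vc l j k z * f z) y) x)
      = ∑ l, (pd i (fun y => Vhat i j y * pd l (fun z => Vhat l j z * f z) y) x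
          + ( -(x j + x i * (if i = j then (1:ℝ) else 0)) *
            (x l * (((if l = j then (1:ℝ) else 0) - x l * x j) * f x))
        + ((if i = j then (1:ℝ) else 0) - x i * x j) *
            ( 2 * x i * ( -(x j + x l * (if l = j then 1 else 0)) * f x
                + ((if l = j then (1:ℝ) else 0) - x l * x j) * pd l f x )
            + ((if i = l then (1:ℝ) else 0) * (((if l = j then (1:ℝ) else 0) - x l * x j) * f x)
              + x l * ( -((if i = l then (1:ℝ) else 0) * x j + x l * (if i = j then 1 else 0)) * f x
                  + ((if l = j then (1:ℝ) else 0) - x l * x j) * pd i f x )) ) )) := by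
    intro i j
    rw [Finset.sum_comm]
    refine Finset.sum_congr rfl fun l _ => ?_
    have h := key i j l
    linarith [h]
  rw [Finset.sum_congr rfl (fun i _ => Finset.sum_congr rfl (fun j _ => swap i j))]
  have halg2 := halg
  simp only [Finset.sum_add_distrib] at halg2 ⊢
  linarith
end

section
/- Let n ≥ 2, let σ be the uniform probability measure on the unit sphere S^{n-1} ⊂ ℝ^n, and let L be the generator of the Random Quadratic Form, (L u)(x) := ½ Σ_{j,k=1}^n G_{jk}(x)·∇( G_{jk}·∇u )(x) with G_{jk}(x) := ½ P_x (e_j x_k + e_k x_j). Then ∫_{S^{n-1}} (L u)(x) dσ(x) = 0 for every twice continuously differentiable u : ℝ^n → ℝ; i.e., the uniform measure on the sphere is an invariant measure of the Random Quadratic Form. -/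
open Matrix MeasureTheory

/-- The diffusion vector fields of the Random Quadratic Form:
`G_{jk}(x) = ½ P_x (x_k e_j + x_j e_k)` where `P_x = I - x xᵀ`. -/
noncomputable def rqfField {n : ℕ} (j k : Fin n) (x : EuclideanSpace ℝ (Fin n)) :
    EuclideanSpace ℝ (Fin n) :=
  (1 / 2 : ℝ) • toE (((1 : Matrix (Fin n) (Fin n) ℝ) - vecMulVec x x).mulVec
    (x k • (Pi.single j (1 : ℝ) : Fin n → ℝ) + x j • (Pi.single k (1 : ℝ) : Fin n → ℝ)))

/-- The directional derivative `F·∇u` of `u` along a vector field `F`. -/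
noncomputable def dirDeriv {n : ℕ}
    (F : EuclideanSpace ℝ (Fin n) → EuclideanSpace ℝ (Fin n))
    (u : EuclideanSpace ℝ (Fin n) → ℝ) (x : EuclideanSpace ℝ (Fin n)) : ℝ :=
  fderiv ℝ u x (F x)

/-- The generator of the Random Quadratic Form,
`(L u)(x) = ½ Σ_{j,k} G_{jk}(x)·∇(G_{jk}·∇u)(x)`. -/
noncomputable def rqfGen {n : ℕ} (u : EuclideanSpace ℝ (Fin n) → ℝ)
    (x : EuclideanSpace ℝ (Fin n)) : ℝ :=
  (1 / 2 : ℝ) * ∑ j, ∑ k, dirDeriv (rqfField j k) (dirDeriv (rqfField j k) u) x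

/-- The uniform probability measure on the unit sphere `S^{n-1} ⊆ ℝⁿ`:
the normalized restriction of the `(n-1)`-dimensional Hausdorff (surface)
measure to the sphere. -/
noncomputable def sphereUniform (n : ℕ) : Measure (EuclideanSpace ℝ (Fin n)) :=
  (μH[(n : ℝ) - 1] (Metric.sphere (0 : EuclideanSpace ℝ (Fin n)) 1))⁻¹ •
    (μH[(n : ℝ) - 1]).restrict (Metric.sphere (0 : EuclideanSpace ℝ (Fin n)) 1)

set_option linter.unusedVariables false

variable {n : ℕ}

abbrev E (n : ℕ) := EuclideanSpace ℝ (Fin n)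
noncomputable def es {n : ℕ} (j : Fin n) : E n := EuclideanSpace.single j 1

lemma rqfField_eq {n : ℕ} (j k : Fin n) (x : E n) :
    rqfField j k x = (x k / 2) • es j + (x j / 2) • es k - (x j * x k) • x := by
  ext m
  simp only [rqfField, toE, Matrix.sub_mulVec, Matrix.one_mulVec, es]
  simp only [PiLp.smul_apply, PiLp.add_apply, PiLp.sub_apply, smul_eq_mul,
    Pi.add_apply, Pi.smul_apply, Pi.sub_apply, Matrix.mulVec, Matrix.vecMulVec_apply,
    dotProduct, EuclideanSpace.single_apply, Pi.single_apply,
    mul_add, mul_ite, mul_one, mul_zero, Finset.sum_add_distrib,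
    Finset.sum_ite_eq, Finset.sum_ite_eq', Finset.mem_univ, if_true]
  split_ifs <;> ring

variable {n : ℕ}

lemma sum_smul_es (x : E n) : ∑ j, x j • (es j) = x := by
  ext m
  rw [WithLp.ofLp_sum, Finset.sum_apply]
  simp [es, EuclideanSpace.single_apply, PiLp.smul_apply]

lemma sum_sq_of_norm (x : E n) (hx : ‖x‖ = 1) : ∑ l, x l ^ 2 = 1 := by
  have h := EuclideanSpace.norm_eq x
  rw [hx] at h
  have h2 : (1:ℝ) = Real.sqrt (∑ l, ‖x l‖ ^ 2) := h
  have h3 : ∑ l, ‖x l‖ ^ 2 = 1 := by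
    nlinarith [Real.sq_sqrt (by positivity : (0:ℝ) ≤ ∑ l, ‖x l‖ ^ 2)]
  simpa [Real.norm_eq_abs, sq_abs] using h3

lemma proj_hasFDerivAt (j : Fin n) (x : E n) :
    HasFDerivAt (fun y : E n => y j) (EuclideanSpace.proj (𝕜 := ℝ) j) x :=
  (EuclideanSpace.proj (𝕜 := ℝ) j).hasFDerivAt

lemma sum_mul_g (g : E n →L[ℝ] ℝ) (x : E n) : ∑ k, x k * g (es k) = g x := by
  conv_rhs => rw [← sum_smul_es x]
  rw [map_sum]
  simp [smul_eq_mul]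

lemma sum_mul_B_left (B : E n →L[ℝ] E n →L[ℝ] ℝ) (x : E n) (b : E n) :
    ∑ k, x k * B (es k) b = B x b := by
  conv_rhs => rw [← sum_smul_es x]
  rw [map_sum]
  simp [ContinuousLinearMap.sum_apply, smul_eq_mul]

lemma es_apply (j m : Fin n) : (es j : E n) m = if m = j then (1:ℝ) else 0 :=
  EuclideanSpace.single_apply j 1 m

lemma proj_apply (j : Fin n) (w : E n) : EuclideanSpace.proj (𝕜 := ℝ) j w = w j := rfl

noncomputable def rot (j k : Fin n) (x : E n) : E n := x j • es k - x k • es j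

noncomputable def Da (j k : Fin n) : E n →L[ℝ] E n :=
  (EuclideanSpace.proj (𝕜 := ℝ) j).smulRight (es k)
    - (EuclideanSpace.proj (𝕜 := ℝ) k).smulRight (es j)

lemma Da_apply (j k : Fin n) (w : E n) : Da j k w = w j • es k - w k • es j := by
  simp [Da, proj_apply]

lemma hasFDerivAt_rot (j k : Fin n) (x : E n) :
    HasFDerivAt (rot j k) (Da j k) x := by
  have h := ((proj_hasFDerivAt (n := n) j x).smul (hasFDerivAt_const (es k : E n) x)).sub
    ((proj_hasFDerivAt (n := n) k x).smul (hasFDerivAt_const (es j : E n) x))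
  exact h.congr_fderiv (by ext w; rw [Da_apply]; simp [proj_apply])

noncomputable def Dg (j k : Fin n) (x : E n) : E n →L[ℝ] E n :=
  ((1/2 : ℝ) • (EuclideanSpace.proj (𝕜 := ℝ) k).smulRight (es j))
  + ((1/2 : ℝ) • (EuclideanSpace.proj (𝕜 := ℝ) j).smulRight (es k))
  - ((EuclideanSpace.proj (𝕜 := ℝ) j).smulRight (x k • x)
      + (EuclideanSpace.proj (𝕜 := ℝ) k).smulRight (x j • x))
  - ((x j * x k) • ContinuousLinearMap.id ℝ (E n))

lemma Dg_apply (j k : Fin n) (x w : E n) :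
    Dg j k x w = (w k / 2) • es j + (w j / 2) • es k
      - (w j * x k + w k * x j) • x - (x j * x k) • w := by
  simp only [Dg, ContinuousLinearMap.sub_apply, ContinuousLinearMap.add_apply,
    ContinuousLinearMap.smul_apply, ContinuousLinearMap.smulRight_apply,
    ContinuousLinearMap.id_apply, proj_apply]
  module

lemma hasFDerivAt_rqfField (j k : Fin n) (x : E n) :
    HasFDerivAt (rqfField j k) (Dg j k x) x := by
  have hfun : (rqfField j k : E n → E n)
      = fun y => (y k * (2⁻¹:ℝ)) • es j + (y j * (2⁻¹:ℝ)) • es k - (y j * y k) • y := by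
    funext y
    rw [rqfField_eq]
    simp only [div_eq_mul_inv]
  rw [hfun]
  have h1 := proj_hasFDerivAt (n := n) j x
  have h2 := proj_hasFDerivAt (n := n) k x
  have hA := (h2.mul_const (2⁻¹:ℝ)).smul (hasFDerivAt_const (es j : E n) x)
  have hB := (h1.mul_const (2⁻¹:ℝ)).smul (hasFDerivAt_const (es k : E n) x)
  have hC := (h1.mul h2).smul (hasFDerivAt_id x)
  have h := (hA.add hB).sub hC
  exact h.congr_fderiv (by
    ext w m
    simp only [ContinuousLinearMap.sub_apply, ContinuousLinearMap.add_apply,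
      ContinuousLinearMap.smul_apply, ContinuousLinearMap.smulRight_apply,
      ContinuousLinearMap.id_apply, ContinuousLinearMap.coe_smul', Pi.smul_apply,
      ContinuousLinearMap.zero_apply, smul_zero, zero_add, add_zero,
      Dg_apply, proj_apply, id_eq, Pi.mul_apply, PiLp.add_apply, PiLp.sub_apply, PiLp.smul_apply, smul_eq_mul]
    ring)

lemma quadA (B : E n →L[ℝ] E n →L[ℝ] ℝ) (x : E n) (hx : ∑ l, x l ^ 2 = 1) :
    ∑ j, ∑ k, B (rot j k x) (rot j k x)
      = 2 * (∑ j, B (es j) (es j)) - 2 * B x x := by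
  have inner : ∀ j, ∑ k, B (rot j k x) (rot j k x)
      = (x j)^2 * (∑ k, B (es k) (es k)) - (x j) * B x (es j)
        - (x j) * B (es j) x + B (es j) (es j) := by
    intro j
    have step : ∀ k, B (rot j k x) (rot j k x)
        = (x j)^2 * B (es k) (es k) - (x k * B (es k) (es j)) * (x j)
          - (x k * B (es j) (es k)) * (x j) + (x k)^2 * B (es j) (es j) := by
      intro k
      simp only [rot, map_sub, _root_.map_smul, ContinuousLinearMap.sub_apply,
        ContinuousLinearMap.smul_apply, smul_eq_mul]
      ring
    rw [Finset.sum_congr rfl fun k _ => step k]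
    simp only [Finset.sum_add_distrib, Finset.sum_sub_distrib,
      ← Finset.mul_sum, ← Finset.sum_mul]
    rw [sum_mul_B_left B x (es j), sum_mul_g (B (es j)) x, hx]
    ring
  rw [Finset.sum_congr rfl fun j _ => inner j]
  simp only [Finset.sum_add_distrib, Finset.sum_sub_distrib,
    ← Finset.mul_sum, ← Finset.sum_mul]
  rw [sum_mul_B_left B x x, sum_mul_g (B x) x, hx]
  ring

lemma quadG (B : E n →L[ℝ] E n →L[ℝ] ℝ) (x : E n) (hx : ∑ l, x l ^ 2 = 1) :
    ∑ j, ∑ k, B (rqfField j k x) (rqfField j k x)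
      = (1/2) * (∑ j, B (es j) (es j)) - (1/2) * B x x := by
  have inner : ∀ j, ∑ k, B (rqfField j k x) (rqfField j k x)
      = B (es j) (es j) * (1/4) - (x j * B (es j) x) * (1/4)
        - (x j * B x (es j)) * (1/4) + (x j)^2 * ((∑ k, B (es k) (es k)) / 4) := by
    intro j
    have step : ∀ k, B (rqfField j k x) (rqfField j k x)
        = (x k)^2 * (B (es j) (es j) * (1/4))
          + (x k * B (es j) (es k)) * (x j * (1/4))
          + (x k * B (es k) (es j)) * (x j * (1/4))
          + (x k)^2 * (-(x j/2) * B (es j) x)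
          + B (es k) (es k) * ((x j)^2 * (1/4))
          + (x k * B (es k) x) * (-(x j)^2/2)
          + (x k)^2 * (-(x j/2) * B x (es j))
          + (x k * B x (es k)) * (-(x j)^2/2)
          + (x k)^2 * ((x j)^2 * B x x) := by
      intro k
      rw [rqfField_eq]
      simp only [map_add, map_sub, _root_.map_smul, ContinuousLinearMap.add_apply,
        ContinuousLinearMap.sub_apply, ContinuousLinearMap.smul_apply, smul_eq_mul]
      ring
    rw [Finset.sum_congr rfl fun k _ => step k]
    simp only [Finset.sum_add_distrib, ← Finset.sum_mul]
    rw [sum_mul_g (B (es j)) x, sum_mul_B_left B x (es j),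
      sum_mul_B_left B x x, sum_mul_g (B x) x, hx]
    ring
  rw [Finset.sum_congr rfl fun j _ => inner j]
  simp only [Finset.sum_add_distrib, Finset.sum_sub_distrib, ← Finset.sum_mul]
  rw [sum_mul_B_left B x x, sum_mul_g (B x) x, hx]
  ring

lemma driftA (g : E n →L[ℝ] ℝ) (x : E n) :
    ∑ j, ∑ k, g (Da j k (rot j k x))
      = (2 - 2*(n:ℝ)) * g x := by
  have inner : ∀ j, ∑ k, g (Da j k (rot j k x))
      = -(g x) + (x j * g (es j)) * (2 - (n:ℝ)) := by
    intro j
    have step : ∀ k, g (Da j k (rot j k x))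
        = -(x k * g (es k)) - (x j * g (es j))
          + (if k = j then 2 * (x j * g (es j)) else 0) := by
      intro k
      rw [Da_apply, rot]
      simp only [PiLp.sub_apply, PiLp.smul_apply, smul_eq_mul, es_apply,
        map_sub, _root_.map_smul, smul_eq_mul]
      by_cases h : k = j
      · subst h; simp; ring
      · simp [h, Ne.symm h]
    rw [Finset.sum_congr rfl fun k _ => step k]
    simp only [Finset.sum_add_distrib, Finset.sum_sub_distrib, Finset.sum_neg_distrib,
      Finset.sum_ite_eq', Finset.mem_univ, if_true, Finset.sum_const,
      Finset.card_univ, Fintype.card_fin, nsmul_eq_mul]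
    rw [sum_mul_g g x]
    ring
  rw [Finset.sum_congr rfl fun j _ => inner j]
  simp only [Finset.sum_add_distrib, ← Finset.sum_mul, Finset.sum_neg_distrib,
    Finset.sum_const, Finset.card_univ, Fintype.card_fin, nsmul_eq_mul]
  rw [sum_mul_g g x]
  ring

lemma rqfField_apply (j k : Fin n) (x : E n) (m : Fin n) :
    rqfField j k x m = (x k / 2) * (es j m) + (x j / 2) * (es k m) - x j * x k * x m := by
  rw [rqfField_eq]
  simp [PiLp.add_apply, PiLp.sub_apply, PiLp.smul_apply, smul_eq_mul]

lemma driftG (g : E n →L[ℝ] ℝ) (x : E n) (hx : ∑ l, x l ^ 2 = 1) :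
    ∑ j, ∑ k, g (Dg j k x (rqfField j k x))
      = (-((n:ℝ) - 1) / 2) * g x := by
  have inner : ∀ j, ∑ k, g (Dg j k x (rqfField j k x))
      = (x j * g (es j)) * ((n:ℝ)/4 - 1/2)
        + (x j)^2 * (g x * (1 - (n:ℝ)/2)) + g x * (-1/4) := by
    intro j
    have step : ∀ k, g (Dg j k x (rqfField j k x))
        = (x j * g (es j)) * (1/4)
          - (x k)^2 * (x j * g (es j))
          + (x k * g (es k)) * (1/4)
          - (x k * g (es k)) * (x j)^2
          - (x k)^2 * (g x * (1/2))
          - (x j)^2 * (g x) * (1/2)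
          + (x k)^2 * (3 * (x j)^2 * g x)
          + (if k = j then (x j * g (es j)) * (1/2) - (x j)^2 * g x else 0) := by
      intro k
      rw [Dg_apply]
      simp only [map_add, map_sub, _root_.map_smul, smul_eq_mul, rqfField_apply, es_apply]
      rw [show (g (rqfField j k x)) = (x k / 2) * g (es j) + (x j / 2) * g (es k)
          - x j * x k * g x by
        rw [rqfField_eq]
        simp only [map_add, map_sub, _root_.map_smul, smul_eq_mul]
        try ring]
      by_cases h : k = j
      · subst h; simp; ring
      · simp [h, Ne.symm h]; ring
    rw [Finset.sum_congr rfl fun k _ => step k]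
    simp only [Finset.sum_add_distrib, Finset.sum_sub_distrib, ← Finset.sum_mul,
      Finset.sum_ite_eq', Finset.mem_univ, if_true, Finset.sum_const,
      Finset.card_univ, Fintype.card_fin, nsmul_eq_mul]
    rw [sum_mul_g g x, hx]
    ring
  rw [Finset.sum_congr rfl fun j _ => inner j]
  simp only [Finset.sum_add_distrib, ← Finset.sum_mul, Finset.sum_const,
    Finset.card_univ, Fintype.card_fin, nsmul_eq_mul]
  rw [sum_mul_g g x, hx]
  ring

section Rotation
open Real

/-- rotation by angle `t` in the `(j,k)`-plane -/
noncomputable def rotAux (j k : Fin n) (t : ℝ) (x : E n) : E n :=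
  toE fun m => if m = j then Real.cos t * x j - Real.sin t * x k
    else if m = k then Real.sin t * x j + Real.cos t * x k else x m

lemma rotAux_apply (j k : Fin n) (t : ℝ) (x : E n) (m : Fin n) :
    rotAux j k t x m = if m = j then Real.cos t * x j - Real.sin t * x k
      else if m = k then Real.sin t * x j + Real.cos t * x k else x m := rfl

lemma rotAux_eq (j k : Fin n) (hjk : j ≠ k) (t : ℝ) (x : E n) :
    rotAux j k t x = (Real.cos t * x j - Real.sin t * x k) • es j
      + (Real.sin t * x j + Real.cos t * x k) • es k
      + (x - x j • es j - x k • es k) := by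
  ext m
  simp only [rotAux, toE, PiLp.add_apply, PiLp.sub_apply, PiLp.smul_apply, smul_eq_mul,
    es_apply]
  by_cases h1 : m = j
  · subst h1
    have h2 : ¬ (m = k) := fun h => hjk (h ▸ rfl)
    simp [h2]
  · by_cases h2 : m = k
    · subst h2; simp [h1]
    · simp [h1, h2]

lemma rotAux_add (j k : Fin n) (hjk : j ≠ k) (s t : ℝ) (x : E n) :
    rotAux j k s (rotAux j k t x) = rotAux j k (s + t) x := by
  ext m
  simp only [rotAux, toE]
  by_cases h1 : m = j
  · subst h1
    simp [hjk, Ne.symm hjk, Real.cos_add, Real.sin_add]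
    ring
  · by_cases h2 : m = k
    · subst h2
      simp [Ne.symm hjk, hjk, h1, Real.cos_add, Real.sin_add]
      ring
    · simp [h1, h2]

lemma rotAux_zero (j k : Fin n) (x : E n) : rotAux j k 0 x = x := by
  ext m
  simp only [rotAux, toE, Real.cos_zero, Real.sin_zero]
  by_cases h1 : m = j
  · subst h1; simp
  · by_cases h2 : m = k
    · subst h2; simp [h1]
    · simp [h1, h2]

lemma rotAux_norm (j k : Fin n) (hjk : j ≠ k) (t : ℝ) (x : E n) :
    ‖rotAux j k t x‖ = ‖x‖ := by
  rw [EuclideanSpace.norm_eq, EuclideanSpace.norm_eq]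
  congr 1
  have hsub : ({j, k} : Finset (Fin n)) ⊆ Finset.univ := Finset.subset_univ _
  rw [← Finset.sum_sdiff hsub, ← Finset.sum_sdiff hsub]
  congr 1
  · refine Finset.sum_congr rfl fun m hm => ?_
    rw [Finset.mem_sdiff] at hm
    have hm' := hm.2
    simp only [Finset.mem_insert, Finset.mem_singleton, not_or] at hm'
    simp [rotAux, toE, hm'.1, hm'.2]
  · rw [Finset.sum_pair hjk, Finset.sum_pair hjk]
    have h1 : rotAux j k t x j = Real.cos t * x j - Real.sin t * x k := by
      rw [rotAux_apply]; simp
    have h2 : rotAux j k t x k = Real.sin t * x j + Real.cos t * x k := by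
      rw [rotAux_apply]; simp [Ne.symm hjk]
    rw [h1, h2]
    simp only [Real.norm_eq_abs, sq_abs]
    nlinarith [Real.sin_sq_add_cos_sq t]

noncomputable def rotEquiv (j k : Fin n) (hjk : j ≠ k) (t : ℝ) : E n ≃ₗᵢ[ℝ] E n where
  toLinearEquiv :=
  { toFun := rotAux j k t
    map_add' := by
      intro a b; ext m
      simp only [rotAux, toE, PiLp.add_apply]
      split_ifs <;> ring
    map_smul' := by
      intro c a; ext m
      simp only [rotAux, toE, PiLp.smul_apply, smul_eq_mul, RingHom.id_apply]
      split_ifs <;> ring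
    invFun := rotAux j k (-t)
    left_inv := fun x => by
      show rotAux j k (-t) (rotAux j k t x) = x
      rw [rotAux_add j k hjk (-t) t x, neg_add_cancel, rotAux_zero]
    right_inv := fun x => by
      show rotAux j k t (rotAux j k (-t) x) = x
      rw [rotAux_add j k hjk t (-t) x, add_neg_cancel, rotAux_zero] }
  norm_map' := rotAux_norm j k hjk t

lemma rotEquiv_apply (j k : Fin n) (hjk : j ≠ k) (t : ℝ) (x : E n) :
    rotEquiv j k hjk t x = rotAux j k t x := rfl

end Rotation

section Integration

noncomputable def sph (n : ℕ) : Set (E n) := Metric.sphere (0 : E n) 1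

noncomputable def nu (n : ℕ) : Measure (E n) := (μH[(n : ℝ) - 1]).restrict (sph n)

lemma sph_measurableSet : MeasurableSet (sph n) := Metric.isClosed_sphere.measurableSet

lemma map_rot_nu (j k : Fin n) (hjk : j ≠ k) (t : ℝ) :
    Measure.map (rotAux j k t) (nu n) = nu n := by
  set e := (rotEquiv j k hjk t).toIsometryEquiv with he
  set me := e.toHomeomorph.toMeasurableEquiv with hme
  have hco : (me : E n → E n) = rotAux j k t := rfl
  have hmeas : Measure.map me (μH[(n : ℝ) - 1]) = μH[(n : ℝ) - 1] := by
    rw [show (me : E n → E n) = (e : E n → E n) from rfl]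
    exact e.map_hausdorffMeasure _
  have hpre : me ⁻¹' (sph n) = sph n := by
    ext x
    simp only [Set.mem_preimage, sph, Metric.mem_sphere, dist_zero_right]
    rw [show me x = rotAux j k t x from rfl, rotAux_norm j k hjk]
  have h1 := MeasurableEquiv.restrict_map me (μH[(n : ℝ) - 1]) (sph n)
  rw [hmeas, hpre] at h1
  rw [← hco, nu, ← h1]

lemma integral_comp_rot (j k : Fin n) (hjk : j ≠ k) (t : ℝ) (f : E n → ℝ)
    (hf : Continuous f) :
    ∫ x, f (rotAux j k t x) ∂(nu n) = ∫ x, f x ∂(nu n) := by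
  have hR : Continuous (rotAux j k t) := (rotEquiv j k hjk t).continuous
  conv_rhs => rw [← map_rot_nu j k hjk t]
  exact (integral_map hR.aemeasurable hf.aestronglyMeasurable).symm

lemma integrable_nu (hfin : μH[(n : ℝ) - 1] (sph n) ≠ ⊤) (f : E n → ℝ)
    (hf : Continuous f) : Integrable f (nu n) := by
  haveI : IsFiniteMeasure (nu n) := ⟨by
    rw [nu, Measure.restrict_apply_univ]; exact hfin.lt_top⟩
  obtain ⟨C, hC⟩ := (isCompact_sphere (0 : E n) 1).exists_bound_of_continuousOn
    hf.continuousOn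
  refine Integrable.mono' (integrable_const C) hf.aestronglyMeasurable ?_
  filter_upwards [ae_restrict_mem (μ := μH[(n : ℝ) - 1]) sph_measurableSet] with x hx
  exact hC x hx

lemma continuous_rot (j k : Fin n) : Continuous (rot j k : E n → E n) := by
  have h1 : Continuous fun y : E n => y j := (EuclideanSpace.proj (𝕜 := ℝ) j).continuous
  have h2 : Continuous fun y : E n => y k := (EuclideanSpace.proj (𝕜 := ℝ) k).continuous
  exact (h1.smul continuous_const).sub (h2.smul continuous_const)

lemma continuous_dirDeriv_rot (j k : Fin n) (v : E n → ℝ) (hv : ContDiff ℝ 1 v) :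
    Continuous (dirDeriv (rot j k) v) := by
  have h1 : Continuous (fderiv ℝ v) := hv.continuous_fderiv one_ne_zero
  exact h1.clm_apply (continuous_rot j k)

lemma hasDerivAt_rotAux (j k : Fin n) (hjk : j ≠ k) (t : ℝ) (x : E n) :
    HasDerivAt (fun s => rotAux j k s x) (rot j k (rotAux j k t x)) t := by
  have hc1 : HasDerivAt (fun s => Real.cos s * x j - Real.sin s * x k)
      (-Real.sin t * x j - Real.cos t * x k) t :=
    ((Real.hasDerivAt_cos t).mul_const (x j)).sub ((Real.hasDerivAt_sin t).mul_const (x k))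
  have hc2 : HasDerivAt (fun s => Real.sin s * x j + Real.cos s * x k)
      (Real.cos t * x j + -Real.sin t * x k) t :=
    ((Real.hasDerivAt_sin t).mul_const (x j)).add ((Real.hasDerivAt_cos t).mul_const (x k))
  have h := ((hc1.smul_const (es j : E n)).add (hc2.smul_const (es k : E n))).add_const
    (x - x j • es j - x k • es k)
  have hfun : (fun s => rotAux j k s x)
      = fun s => (Real.cos s * x j - Real.sin s * x k) • (es j : E n)
        + (Real.sin s * x j + Real.cos s * x k) • es k + (x - x j • es j - x k • es k) :=
    funext fun s => rotAux_eq j k hjk s x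
  rw [hfun]
  refine h.congr_deriv ?_
  have haj : rotAux j k t x j = Real.cos t * x j - Real.sin t * x k := by
    rw [rotAux_apply]; simp
  have hak : rotAux j k t x k = Real.sin t * x j + Real.cos t * x k := by
    rw [rotAux_apply]; simp [Ne.symm hjk]
  rw [rot, haj, hak]
  module

lemma integral_dirDeriv_rot_zero (j k : Fin n)
    (hfin : μH[(n : ℝ) - 1] (sph n) ≠ ⊤)
    (v : E n → ℝ) (hv : ContDiff ℝ 1 v) :
    ∫ x, dirDeriv (rot j k) v x ∂(nu n) = 0 := by
  by_cases hjk : j = k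
  · subst hjk
    have hz : ∀ x : E n, dirDeriv (rot j j) v x = 0 := by
      intro x
      simp [dirDeriv, rot]
    simp [hz]
  haveI hfm : IsFiniteMeasure (nu n) := ⟨by
    rw [nu, Measure.restrict_apply_univ]; exact hfin.lt_top⟩
  set ψ := dirDeriv (rot j k) v with hψ
  have hψc : Continuous ψ := continuous_dirDeriv_rot j k v hv
  have hvc : Continuous v := hv.continuous
  -- pointwise FTC
  have hchain : ∀ (t : ℝ) (x : E n),
      HasDerivAt (fun s => v (rotAux j k s x)) (ψ (rotAux j k t x)) t := by
    intro t x
    exact ((hv.differentiable one_ne_zero) _).hasFDerivAt.comp_hasDerivAt t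
      (hasDerivAt_rotAux j k hjk t x)
  have hcont_t : ∀ x : E n, Continuous fun t => rotAux j k t x := by
    intro x
    have hfun : (fun s => rotAux j k s x)
        = fun s => (Real.cos s * x j - Real.sin s * x k) • (es j : E n)
          + (Real.sin s * x j + Real.cos s * x k) • es k + (x - x j • es j - x k • es k) :=
      funext fun s => rotAux_eq j k hjk s x
    rw [hfun]
    fun_prop
  have hFTC : ∀ x : E n, (∫ t in (0:ℝ)..1, ψ (rotAux j k t x)) = v (rotAux j k 1 x) - v x := by
    intro x
    have h := intervalIntegral.integral_eq_sub_of_hasDerivAt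
      (f := fun s => v (rotAux j k s x)) (fun t _ => hchain t x)
      ((hψc.comp (hcont_t x)).intervalIntegrable 0 1)
    rw [h]
    simp only [rotAux_zero]
  -- the integrand as a function on the product, continuity
  have hjoint : Continuous fun p : E n × ℝ => rotAux j k p.2 p.1 := by
    have hfun : (fun p : E n × ℝ => rotAux j k p.2 p.1)
        = fun p : E n × ℝ => (Real.cos p.2 * p.1 j - Real.sin p.2 * p.1 k) • (es j : E n)
          + (Real.sin p.2 * p.1 j + Real.cos p.2 * p.1 k) • es k
          + (p.1 - p.1 j • es j - p.1 k • es k) :=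
      funext fun p => rotAux_eq j k hjk p.2 p.1
    rw [hfun]
    have h1 : Continuous fun p : E n × ℝ => p.1 j :=
      (EuclideanSpace.proj (𝕜 := ℝ) j).continuous.comp continuous_fst
    have h2 : Continuous fun p : E n × ℝ => p.1 k :=
      (EuclideanSpace.proj (𝕜 := ℝ) k).continuous.comp continuous_fst
    fun_prop
  have hφc : Continuous fun p : E n × ℝ => ψ (rotAux j k p.2 p.1) := hψc.comp hjoint
  -- boundedness on the sphere
  obtain ⟨C, hC⟩ := (isCompact_sphere (0 : E n) 1).exists_bound_of_continuousOn
    hψc.continuousOn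
  haveI hfm2 : IsFiniteMeasure (volume.restrict (Set.Ioc (0:ℝ) 1)) := ⟨by
    rw [Measure.restrict_apply_univ]; simp [Real.volume_Ioc]⟩
  have hnull : ((nu n).prod (volume.restrict (Set.Ioc (0:ℝ) 1)))
      (((sph n)ᶜ) ×ˢ (Set.univ : Set ℝ)) = 0 := by
    rw [Measure.prod_prod]
    have h0 : nu n ((sph n)ᶜ) = 0 := by
      rw [nu, Measure.restrict_apply sph_measurableSet.compl, Set.compl_inter_self,
        measure_empty]
    rw [h0, zero_mul]
  have hae : ∀ᵐ p : E n × ℝ ∂((nu n).prod (volume.restrict (Set.Ioc (0:ℝ) 1))),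
      p.1 ∈ sph n := by
    rw [ae_iff]
    refine measure_mono_null (fun p hp => ?_) hnull
    simp only [Set.mem_setOf_eq] at hp
    exact ⟨hp, trivial⟩
  have hintprod : Integrable (Function.uncurry fun (x : E n) (t : ℝ) => ψ (rotAux j k t x))
      ((nu n).prod (volume.restrict (Set.Ioc (0:ℝ) 1))) := by
    refine Integrable.mono' (integrable_const C) hφc.aestronglyMeasurable ?_
    filter_upwards [hae] with p hp
    have hmem : rotAux j k p.2 p.1 ∈ sph n := by
      simp only [sph, Metric.mem_sphere, dist_zero_right] at hp ⊢
      rw [rotAux_norm j k hjk]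
      exact hp
    exact hC _ hmem
  have hswap := integral_integral_swap hintprod
  have hint1 : Integrable (fun x => v (rotAux j k 1 x)) (nu n) :=
    integrable_nu hfin _ (hvc.comp ((rotEquiv j k hjk 1).continuous))
  have hint2 : Integrable v (nu n) := integrable_nu hfin v hvc
  have hchaincalc : (0:ℝ) = ∫ x, ψ x ∂(nu n) := by
    calc (0:ℝ) = ∫ x, (v (rotAux j k 1 x) - v x) ∂(nu n) := by
          rw [integral_sub hint1 hint2, integral_comp_rot j k hjk 1 v hvc, sub_self]
      _ = ∫ x, (∫ t in Set.Ioc (0:ℝ) 1, ψ (rotAux j k t x) ∂volume) ∂(nu n) := by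
          refine (integral_congr_ae (Filter.Eventually.of_forall fun x => ?_)).symm
          rw [← intervalIntegral.integral_of_le zero_le_one, hFTC x]
      _ = ∫ t in Set.Ioc (0:ℝ) 1, (∫ x, ψ (rotAux j k t x) ∂(nu n)) ∂volume := hswap
      _ = ∫ t in Set.Ioc (0:ℝ) 1, (∫ x, ψ x ∂(nu n)) ∂volume := by
          refine integral_congr_ae (Filter.Eventually.of_forall fun t => ?_)
          exact integral_comp_rot j k hjk t ψ hψc
      _ = ∫ x, ψ x ∂(nu n) := by
          rw [integral_const]
          simp [Real.volume_Ioc]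
  exact hchaincalc.symm

lemma dirDeriv_dirDeriv {u : E n → ℝ} (hu : ContDiff ℝ 2 u) {F : E n → E n}
    {F' : E n →L[ℝ] E n} {x : E n} (hF : HasFDerivAt F F' x) :
    dirDeriv F (dirDeriv F u) x
      = fderiv ℝ u x (F' (F x)) + fderiv ℝ (fderiv ℝ u) x (F x) (F x) := by
  have h1 : ContDiff ℝ 1 (fderiv ℝ u) := hu.fderiv_right (by norm_num)
  have hc : HasFDerivAt (fderiv ℝ u) (fderiv ℝ (fderiv ℝ u) x) x :=
    (h1.differentiable one_ne_zero x).hasFDerivAt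
  have h := hc.clm_apply hF
  have hfd := h.fderiv
  show fderiv ℝ (fun y => fderiv ℝ u y (F y)) x (F x) = _
  rw [hfd]
  simp [ContinuousLinearMap.add_apply, ContinuousLinearMap.comp_apply,
    ContinuousLinearMap.flip_apply]

lemma contDiff_rot (j k : Fin n) : ContDiff ℝ 1 (rot j k : E n → E n) := by
  have h1 : ContDiff ℝ 1 fun y : E n => y j :=
    (EuclideanSpace.proj (𝕜 := ℝ) j).contDiff
  have h2 : ContDiff ℝ 1 fun y : E n => y k :=
    (EuclideanSpace.proj (𝕜 := ℝ) k).contDiff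
  exact (h1.smul contDiff_const).sub (h2.smul contDiff_const)

lemma contDiff_dirDeriv_rot (j k : Fin n) {u : E n → ℝ} (hu : ContDiff ℝ 2 u) :
    ContDiff ℝ 1 (dirDeriv (rot j k) u) := by
  have h1 : ContDiff ℝ 1 (fderiv ℝ u) := hu.fderiv_right (by norm_num)
  exact h1.clm_apply (contDiff_rot j k)

lemma rqfGen_eq_rot (u : E n → ℝ) (hu : ContDiff ℝ 2 u) (x : E n) (hxn : ‖x‖ = 1) :
    rqfGen u x = (1/8) * ∑ j, ∑ k, dirDeriv (rot j k) (dirDeriv (rot j k) u) x := by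
  have hx := sum_sq_of_norm x hxn
  have hG : ∀ j k : Fin n, dirDeriv (rqfField j k) (dirDeriv (rqfField j k) u) x
      = fderiv ℝ u x (Dg j k x (rqfField j k x))
        + fderiv ℝ (fderiv ℝ u) x (rqfField j k x) (rqfField j k x) :=
    fun j k => dirDeriv_dirDeriv hu (hasFDerivAt_rqfField j k x)
  have hA : ∀ j k : Fin n, dirDeriv (rot j k) (dirDeriv (rot j k) u) x
      = fderiv ℝ u x (Da j k (rot j k x))
        + fderiv ℝ (fderiv ℝ u) x (rot j k x) (rot j k x) :=
    fun j k => dirDeriv_dirDeriv hu (hasFDerivAt_rot j k x)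
  rw [rqfGen]
  rw [Finset.sum_congr rfl fun j _ => Finset.sum_congr rfl fun k _ => hG j k]
  conv_rhs => rw [Finset.sum_congr rfl fun j _ => Finset.sum_congr rfl fun k _ => hA j k]
  simp only [Finset.sum_add_distrib]
  rw [driftG (fderiv ℝ u x) x hx, quadG (fderiv ℝ (fderiv ℝ u) x) x hx,
    driftA (fderiv ℝ u x) x, quadA (fderiv ℝ (fderiv ℝ u) x) x hx]
  ring

/-- **The uniform measure on the sphere is invariant for the Random Quadratic
Form.**  For every `C²` function `u : ℝⁿ → ℝ`,
`∫_{S^{n-1}} (L u) dσ = 0`, where `L` is the generator of the RQF and `σ` the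
uniform probability measure on the unit sphere. -/
theorem stmt10 {n : ℕ} (hn : 2 ≤ n) (u : EuclideanSpace ℝ (Fin n) → ℝ)
    (hu : ContDiff ℝ 2 u) :
    ∫ x, rqfGen u x ∂(sphereUniform n) = 0 := by

  have hSdef : sphereUniform n = (μH[(n : ℝ) - 1] (sph n))⁻¹ • (nu n) := rfl
  by_cases h0 : μH[(n : ℝ) - 1] (sph n) = 0
  · have hz : nu n = 0 := by rw [nu, Measure.restrict_eq_zero]; exact h0
    rw [hSdef, hz, smul_zero, integral_zero_measure]
  by_cases htop : μH[(n : ℝ) - 1] (sph n) = ⊤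
  · rw [hSdef, htop, ENNReal.inv_top, zero_smul, integral_zero_measure]
  rw [hSdef, integral_smul_measure]
  suffices h : ∫ x, rqfGen u x ∂(nu n) = 0 by rw [h, smul_zero]
  have hcong : ∫ x, rqfGen u x ∂(nu n)
      = ∫ x, (1/8) * ∑ j, ∑ k, dirDeriv (rot j k) (dirDeriv (rot j k) u) x ∂(nu n) := by
    refine integral_congr_ae ?_
    filter_upwards [ae_restrict_mem (μ := μH[(n : ℝ) - 1]) sph_measurableSet] with x hx
    have hxn : ‖x‖ = 1 := by
      simpa [sph, Metric.mem_sphere, dist_zero_right] using hx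
    exact rqfGen_eq_rot u hu x hxn
  rw [hcong, MeasureTheory.integral_const_mul]
  have hterm : ∀ j k : Fin n,
      Integrable (fun x => dirDeriv (rot j k) (dirDeriv (rot j k) u) x) (nu n) :=
    fun j k => integrable_nu htop _
      (continuous_dirDeriv_rot j k _ (contDiff_dirDeriv_rot j k hu))
  rw [integral_finset_sum _ (fun j _ => integrable_finset_sum _ (fun k _ => hterm j k))]
  rw [Finset.sum_congr rfl fun j _ => integral_finset_sum _ (fun k _ => hterm j k)]
  rw [Finset.sum_congr rfl fun j _ => Finset.sum_congr rfl fun k _ =>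
    integral_dirDeriv_rot_zero j k htop _ (contDiff_dirDeriv_rot j k hu)]
  simp
end Integration
end

section
/- Let x, y ∈ ℝ^n with ‖x‖ = ‖y‖ = 1 and set z := ⟨x, y⟩. Then ½ Σ_{i,j=1}^n ( −z (x_i x_j + y_i y_j) + (x_i y_j + y_i x_j) )² = (1 − z²)². In other words, the diffusion coefficient Σ(z) of the scalar-product process Z_t = ⟨X_t, Y_t⟩ of two Random Quadratic Forms driven by the same noise equals (1 − z²)², depending only on z and not on the individual positions x, y. -/
open RealInnerProductSpace

/-- **Diffusion coefficient of the scalar-product process.**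
For unit vectors `x, y ∈ ℝⁿ` with `z = ⟪x, y⟫`,
`½ Σ_{i,j} (-z (xᵢxⱼ + yᵢyⱼ) + (xᵢyⱼ + yᵢxⱼ))² = (1 - z²)²`. -/
theorem stmt14 {n : ℕ} (hn : 2 ≤ n) (x y : EuclideanSpace ℝ (Fin n))
    (hx : ‖x‖ = 1) (hy : ‖y‖ = 1) (z : ℝ) (hz : z = ⟪x, y⟫) :
    (1 / 2 : ℝ) * ∑ i, ∑ j,
        (-z * (x i * x j + y i * y j) + (x i * y j + y i * x j)) ^ 2
      = (1 - z ^ 2) ^ 2 := by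
  have hxx : (∑ i, x i * x i) = 1 := by
    have h : ⟪x, x⟫ = 1 := by
      rw [real_inner_self_eq_norm_mul_norm, hx]; ring
    rw [PiLp.inner_apply] at h
    simpa [PiLp.inner_apply, RCLike.inner_apply, conj_trivial, ← pow_two] using h
  have hyy : (∑ i, y i * y i) = 1 := by
    have h : ⟪y, y⟫ = 1 := by
      rw [real_inner_self_eq_norm_mul_norm, hy]; ring
    rw [PiLp.inner_apply] at h
    simpa [PiLp.inner_apply, RCLike.inner_apply, conj_trivial, ← pow_two] using h
  have hxy : (∑ i, x i * y i) = z := by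
    rw [hz]
    simp [PiLp.inner_apply, RCLike.inner_apply, conj_trivial]
    exact Finset.sum_congr rfl fun i _ => mul_comm _ _
  have hstep : (∑ i, ∑ j,
      (-z * (x i * x j + y i * y j) + (x i * y j + y i * x j)) ^ 2)
      = ∑ i, ((1 - z ^ 2) * (x i * x i) + (2 * z ^ 3 - 2 * z) * (x i * y i)
          + (1 - z ^ 2) * (y i * y i)) := by
    refine Finset.sum_congr rfl fun i _ => ?_
    have e : ∀ j, (-z * (x i * x j + y i * y j) + (x i * y j + y i * x j)) ^ 2
        = (y i - z * x i) ^ 2 * (x j * x j)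
          + (2 * (y i - z * x i) * (x i - z * y i)) * (x j * y j)
          + (x i - z * y i) ^ 2 * (y j * y j) := fun j => by ring
    calc (∑ j, (-z * (x i * x j + y i * y j) + (x i * y j + y i * x j)) ^ 2)
        = (y i - z * x i) ^ 2 * (∑ j, x j * x j)
          + (2 * (y i - z * x i) * (x i - z * y i)) * (∑ j, x j * y j)
          + (x i - z * y i) ^ 2 * (∑ j, y j * y j) := by
          simp only [e, Finset.sum_add_distrib, Finset.mul_sum]
      _ = (1 - z ^ 2) * (x i * x i) + (2 * z ^ 3 - 2 * z) * (x i * y i)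
          + (1 - z ^ 2) * (y i * y i) := by
          rw [hxx, hxy, hyy]; ring
  rw [hstep]
  rw [Finset.sum_add_distrib, Finset.sum_add_distrib, ← Finset.mul_sum,
    ← Finset.mul_sum, ← Finset.mul_sum, hxx, hxy, hyy]
  ring
end

section
/- Fix c ∈ (−1, 1). Then: (i) for every y ∈ (−1, 1), ∫_c^y 2x/(1 − x²) dx = log(1 − c²) − log(1 − y²), so that exp( −∫_c^y 2x/(1 − x²) dx ) = (1 − y²)/(1 − c²); and (ii) for every z ∈ (−1, 1), the scale function s(z) := ∫_c^z exp( −∫_c^y 2x/(1 − x²) dx ) dy equals ( (z − z³/3) − (c − c³/3) ) / (1 − c²). In particular s extends continuously to [−1, 1], so s(−1) > −∞ and s(1) < +∞, i.e. both boundary points ±1 of the diffusion dẐ = 2Ẑ(1 − Ẑ²) dt + √2 (1 − Ẑ²) ∂B on [−1,1] are attracting. -/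
lemma aux_pos {x : ℝ} (hx : x ∈ Set.Ioo (-1 : ℝ) 1) : 0 < 1 - x ^ 2 := by
  nlinarith [hx.1, hx.2]

lemma aux_int (c : ℝ) (hc : c ∈ Set.Ioo (-1 : ℝ) 1) {y : ℝ} (hy : y ∈ Set.Ioo (-1 : ℝ) 1) :
    (∫ x in c..y, 2 * x / (1 - x ^ 2)) =
      Real.log (1 - c ^ 2) - Real.log (1 - y ^ 2) := by
  have hsub : Set.uIcc c y ⊆ Set.Ioo (-1 : ℝ) 1 :=
    Set.ordConnected_Ioo.uIcc_subset hc hy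
  have hderiv : ∀ x ∈ Set.uIcc c y,
      HasDerivAt (fun t => -Real.log (1 - t ^ 2)) (2 * x / (1 - x ^ 2)) x := by
    intro x hx
    have hne : (1 - x ^ 2) ≠ 0 := (aux_pos (hsub hx)).ne'
    have h1 : HasDerivAt (fun t : ℝ => 1 - t ^ 2) (-(2 * x)) x := by
      simpa using (hasDerivAt_pow 2 x).const_sub 1
    have := (h1.log hne).neg
    refine this.congr_deriv ?_
    ring
  have hcont : IntervalIntegrable (fun x => 2 * x / (1 - x ^ 2)) MeasureTheory.volume c y := by
    apply ContinuousOn.intervalIntegrable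
    apply ContinuousOn.div
    · fun_prop
    · fun_prop
    · intro x hx; exact (aux_pos (hsub hx)).ne'
  have := intervalIntegral.integral_eq_sub_of_hasDerivAt hderiv hcont
  rw [this]; ring

/-- **The scale function of the scalar-product diffusion.**
Fix `c ∈ (-1,1)`.  Then (i) for `y ∈ (-1,1)`,
`∫_c^y 2x/(1-x²) dx = log(1-c²) - log(1-y²)`, hence
`exp(-∫_c^y 2x/(1-x²) dx) = (1-y²)/(1-c²)`; and (ii) for `z ∈ (-1,1)` the
scale function `s(z) = ∫_c^z exp(-∫_c^y 2x/(1-x²) dx) dy` equals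
`((z - z³/3) - (c - c³/3))/(1-c²)`.  In particular this formula extends
continuously to `[-1,1]`, so `s(-1) > -∞` and `s(1) < +∞`: both boundary
points of the diffusion `dẐ = 2Ẑ(1-Ẑ²)dt + √2(1-Ẑ²)∂B` are attracting. -/
theorem stmt16 (c : ℝ) (hc : c ∈ Set.Ioo (-1 : ℝ) 1) :
    (∀ y ∈ Set.Ioo (-1 : ℝ) 1,
      (∫ x in c..y, 2 * x / (1 - x ^ 2)) =
          Real.log (1 - c ^ 2) - Real.log (1 - y ^ 2) ∧
      Real.exp (-(∫ x in c..y, 2 * x / (1 - x ^ 2))) =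
          (1 - y ^ 2) / (1 - c ^ 2)) ∧
    (∀ z ∈ Set.Ioo (-1 : ℝ) 1,
      (∫ y in c..z, Real.exp (-(∫ x in c..y, 2 * x / (1 - x ^ 2)))) =
          ((z - z ^ 3 / 3) - (c - c ^ 3 / 3)) / (1 - c ^ 2)) ∧
    ContinuousOn (fun z : ℝ => ((z - z ^ 3 / 3) - (c - c ^ 3 / 3)) / (1 - c ^ 2))
      (Set.Icc (-1 : ℝ) 1) := by
  have hcpos := aux_pos hc
  have hexp : ∀ y ∈ Set.Ioo (-1 : ℝ) 1,
      Real.exp (-(∫ x in c..y, 2 * x / (1 - x ^ 2))) = (1 - y ^ 2) / (1 - c ^ 2) := by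
    intro y hy
    rw [aux_int c hc hy]
    have hypos := aux_pos hy
    rw [neg_sub, Real.exp_sub, Real.exp_log hypos, Real.exp_log hcpos]
  refine ⟨fun y hy => ⟨aux_int c hc hy, hexp y hy⟩, fun z hz => ?_, ?_⟩
  · have hsub : Set.uIcc c z ⊆ Set.Ioo (-1 : ℝ) 1 :=
      Set.ordConnected_Ioo.uIcc_subset hc hz
    rw [intervalIntegral.integral_congr (g := fun y => (1 - y ^ 2) / (1 - c ^ 2))
      (fun y hy => hexp y (hsub hy))]
    have hderiv : ∀ x ∈ Set.uIcc c z,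
        HasDerivAt (fun t => (t - t ^ 3 / 3) / (1 - c ^ 2)) ((1 - x ^ 2) / (1 - c ^ 2)) x := by
      intro x hx
      have h1 : HasDerivAt (fun t : ℝ => t - t ^ 3 / 3) (1 - x ^ 2) x := by
        have := ((hasDerivAt_id x).sub ((hasDerivAt_pow 3 x).div_const 3))
        refine this.congr_deriv ?_
        norm_num
      exact h1.div_const _
    have hcont : IntervalIntegrable (fun x => (1 - x ^ 2) / (1 - c ^ 2))
        MeasureTheory.volume c z := by
      apply Continuous.intervalIntegrable; fun_prop
    rw [intervalIntegral.integral_eq_sub_of_hasDerivAt hderiv hcont]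
    ring
  · apply Continuous.continuousOn; fun_prop
end
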